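/- arXiv:2306.08321 — 2 statements merged into one kernel-verified Lean document; each statement's English description precedes it below -/
import Mathlib

section
/- For every integer N ≥ 1 and every function f ∈ NN(N), one has κ(f) ≤ inf{ κ(θ) : θ ∈ ℝ^{(d+2)N} and f_θ(x) = f(x) for all x ∈ B^d } ≤ 3 κ(f). -/
open MeasureTheory Real

noncomputable section

/-- Euclidean space ℝ^d. -/
abbrev E (d : ℕ) := EuclideanSpace ℝ (Fin d)

/-- The ReLU function σ(t) = max{t, 0}. -/
def relu (t : ℝ) : ℝ := max t 0

/-- The quantity (xᵀ,1)v : the inner product of (x,1) ∈ ℝ^{d+1} with v ∈ ℝ^{d+1}. -/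
def aff {d : ℕ} (x : E d) (v : E (d + 1)) : ℝ :=
  (∑ i : Fin d, x i * v i.castSucc) + v (Fin.last d)

/-- Parameters θ = (a_1, w_1, …, a_N, w_N) of a shallow ReLU network of width N. -/
abbrev Params (d N : ℕ) := (Fin N → ℝ) × (Fin N → E (d + 1))

/-- The network function f_θ(x) = Σ_i a_i σ((xᵀ,1) w_i). -/
def networkFn {d N : ℕ} (θ : Params d N) (x : E d) : ℝ :=
  ∑ i, θ.1 i * relu (aff x (θ.2 i))

/-- The path norm κ(θ) = Σ_i |a_i| ‖w_i‖₂. -/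
def pathNorm {d N : ℕ} (θ : Params d N) : ℝ :=
  ∑ i, |θ.1 i| * ‖θ.2 i‖

/-- The squared Euclidean norm ‖θ‖₂² of the parameter vector. -/
def paramNormSq {d N : ℕ} (θ : Params d N) : ℝ :=
  (∑ i, (θ.1 i) ^ 2) + ∑ i, ‖θ.2 i‖ ^ 2

/-- NN(N): functions on the unit ball B^d realized by a width-N shallow ReLU network. -/
def NNclass (d N : ℕ) : Set (E d → ℝ) :=
  {f | ∃ θ : Params d N, ∀ x : E d, ‖x‖ ≤ 1 → f x = networkFn θ x}

/-- NN(N, M): functions realized by a width-N network with path norm κ(θ) ≤ M. -/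
def NNclassM (d N : ℕ) (M : ℝ) : Set (E d → ℝ) :=
  {f | ∃ θ : Params d N, pathNorm θ ≤ M ∧ ∀ x : E d, ‖x‖ ≤ 1 → f x = networkFn θ x}

/-- κ(f) = inf{ Σ_j |c_j| : f(x) = Σ_j c_j σ((xᵀ,1)v_j) on B^d, v_j ∈ S^d }. -/
def kappaF {d : ℕ} (f : E d → ℝ) : ℝ :=
  sInf {s | ∃ (m : ℕ) (c : Fin m → ℝ) (v : Fin m → E (d + 1)),
    (∀ j, ‖v j‖ = 1) ∧ (∀ x : E d, ‖x‖ ≤ 1 → f x = ∑ j, c j * relu (aff x (v j))) ∧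
    s = ∑ j, |c j|}

/-- S_- = {v ∈ S^d : v_{d+1} ≤ -√2/2}. -/
def Sminus (d : ℕ) : Set (E (d + 1)) :=
  {v | ‖v‖ = 1 ∧ v (Fin.last d) ≤ -(Real.sqrt 2 / 2)}

/-- S_+ = -S_-. -/
def Splus (d : ℕ) : Set (E (d + 1)) := {v | -v ∈ Sminus d}

/-- S_0 = S^d \ (S_- ∪ S_+). -/
def Szero (d : ℕ) : Set (E (d + 1)) := {v | ‖v‖ = 1} \ (Sminus d ∪ Splus d)

/-- The variation class F_σ(M): functions f(x) = ∫_{S^d} σ((xᵀ,1)v) dμ(v) for a signed Radon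
measure μ on S^d with ‖μ‖ ≤ M (represented by its Jordan decomposition μ = μp - μn). -/
def Fsigma (d : ℕ) (M : ℝ) : Set (E d → ℝ) :=
  {f | ∃ μp μn : Measure (E (d + 1)), IsFiniteMeasure μp ∧ IsFiniteMeasure μn ∧
    μp {v | ‖v‖ = 1}ᶜ = 0 ∧ μn {v | ‖v‖ = 1}ᶜ = 0 ∧
    (μp Set.univ).toReal + (μn Set.univ).toReal ≤ M ∧
    ∀ x : E d, ‖x‖ ≤ 1 →
      f x = (∫ v, relu (aff x v) ∂μp) - ∫ v, relu (aff x v) ∂μn}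

/-- Empirical L²(μ_n) norm: ‖f‖_{L²(μ_n)} = ((1/n) Σ_i f(X_i)²)^{1/2}. -/
def empNorm {d n : ℕ} (X : Fin n → E d) (f : E d → ℝ) : ℝ :=
  Real.sqrt ((∑ i, (f (X i)) ^ 2) / n)

/-- Local complexity G_n(F; δ, ξ) = E[ sup { |(1/n) Σ_i ξ_i f(X_i)| : f ∈ F, ‖f‖_{L²(μ_n)} ≤ δ} ]. -/
def localComplexity {d n : ℕ} {Ω : Type*} [MeasurableSpace Ω] (P : Measure Ω)
    (F : Set (E d → ℝ)) (X : Fin n → E d) (δ : ℝ) (ξ : Fin n → Ω → ℝ) : ℝ :=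
  ∫ ω, sSup {r | ∃ f ∈ F, empNorm X f ≤ δ ∧ r = |(∑ i, ξ i ω * f (X i)) / n|} ∂P

/-- star(F) = {a f : f ∈ F, a ∈ [0,1]}. -/
def starHull {d : ℕ} (F : Set (E d → ℝ)) : Set (E d → ℝ) :=
  {g | ∃ f ∈ F, ∃ a : ℝ, 0 ≤ a ∧ a ≤ 1 ∧ g = fun x => a * f x}

/-- ∂F = {f₁ - f₂ : f₁, f₂ ∈ F}. -/
def diffClass {d : ℕ} (F : Set (E d → ℝ)) : Set (E d → ℝ) :=
  {g | ∃ f₁ ∈ F, ∃ f₂ ∈ F, g = f₁ - f₂}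

/-- Truncation operator T_b. -/
def truncate {d : ℕ} (b : ℝ) (f : E d → ℝ) : E d → ℝ := fun x => max (-b) (min b (f x))

/-- The Hölder ball H^α on B^d. -/
def HolderBall (d : ℕ) (α : ℝ) : Set (E d → ℝ) :=
  {h | ∃ (r : ℕ) (β : ℝ) (g : E d → ℝ), α = r + β ∧ 0 < β ∧ β ≤ 1 ∧
    (∀ x : E d, ‖x‖ ≤ 1 → g x = h x) ∧ ContDiff ℝ r g ∧
    (∀ k : ℕ, k ≤ r → ∀ x, ‖iteratedFDeriv ℝ k g x‖ ≤ 1) ∧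
    (∀ x y : E d, ‖iteratedFDeriv ℝ r g x - iteratedFDeriv ℝ r g y‖ ≤ ‖x - y‖ ^ β)}
section Basics
variable {d : ℕ}

lemma relu_of_nonneg {t : ℝ} (h : 0 ≤ t) : relu t = t := max_eq_left h
lemma relu_of_nonpos {t : ℝ} (h : t ≤ 0) : relu t = 0 := max_eq_right h
lemma relu_sub_relu_neg (t : ℝ) : relu t - relu (-t) = t := by
  unfold relu; rcases le_total t 0 with h | h
  · rw [max_eq_right h, max_eq_left (by linarith)]; ring
  · rw [max_eq_left h, max_eq_right (by linarith)]; ring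
lemma relu_neg_eq (t : ℝ) : relu (-t) = relu t - t := by
  have := relu_sub_relu_neg t; linarith
lemma relu_nonneg (t : ℝ) : 0 ≤ relu t := le_max_right _ _
lemma relu_smul {c : ℝ} (hc : 0 ≤ c) (t : ℝ) : relu (c * t) = c * relu t := by
  unfold relu
  rcases le_total t 0 with h | h
  · rw [max_eq_right (by nlinarith), max_eq_right h, mul_zero]
  · rw [max_eq_left (by nlinarith), max_eq_left h]

/-- head part of a vector in ℝ^{d+1} -/
def headv (v : E (d + 1)) : E d := WithLp.toLp 2 (fun i => v i.castSucc)

lemma headv_apply (v : E (d + 1)) (i : Fin d) : headv v i = v i.castSucc := rfl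

open RealInnerProductSpace in
lemma aff_eq_inner (x : E d) (v : E (d + 1)) :
    aff x v = ⟪x, headv v⟫ + v (Fin.last d) := by
  simp [aff, PiLp.inner_apply, RCLike.inner_apply, conj_trivial, headv_apply]
  exact Finset.sum_congr rfl fun i _ => mul_comm _ _

lemma aff_add (x : E d) (v w : E (d + 1)) : aff x (v + w) = aff x v + aff x w := by
  simp only [aff, PiLp.add_apply, mul_add, Finset.sum_add_distrib]
  ring

lemma aff_smul (x : E d) (r : ℝ) (v : E (d + 1)) : aff x (r • v) = r * aff x v := by
  simp only [aff, PiLp.smul_apply, smul_eq_mul, Finset.mul_sum, mul_add]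
  congr 1
  · exact Finset.sum_congr rfl fun i _ => by ring
lemma aff_neg (x : E d) (v : E (d + 1)) : aff x (-v) = -aff x v := by
  have := aff_smul x (-1) v; simpa using this
lemma aff_zero (x : E d) : aff x (0 : E (d + 1)) = 0 := by
  have := aff_smul x 0 0; simpa using this

/-- aff as a linear map in the second variable -/
def affLM (x : E d) : E (d + 1) →ₗ[ℝ] ℝ where
  toFun v := aff x v
  map_add' v w := aff_add x v w
  map_smul' r v := by simp [aff_smul]

lemma aff_finset_sum {ι : Type*} (s : Finset ι) (g : ι → E (d + 1)) (x : E d) :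
    aff x (∑ j ∈ s, g j) = ∑ j ∈ s, aff x (g j) := by
  exact map_sum (affLM x) g s

end Basics
section Trichotomy
variable {d : ℕ}
open RealInnerProductSpace

/-- crossing: the hyperplane {aff · v = 0} meets the open unit ball -/
def Xng (v : E (d + 1)) : Prop := |v (Fin.last d)| < ‖headv v‖
/-- aff · v ≥ 0 on the ball -/
def Posv (v : E (d + 1)) : Prop := ‖headv v‖ ≤ v (Fin.last d)
/-- aff · v ≤ 0 on the ball -/
def Negv (v : E (d + 1)) : Prop := v (Fin.last d) ≤ -‖headv v‖

lemma trichotomy (v : E (d + 1)) : Xng v ∨ Posv v ∨ Negv v := by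
  unfold Xng Posv Negv
  rcases lt_or_ge (|v (Fin.last d)|) (‖headv v‖) with h | h
  · exact Or.inl h
  · rcases le_or_gt 0 (v (Fin.last d)) with h0 | h0
    · right; left; rwa [abs_of_nonneg h0] at h
    · right; right; rw [abs_of_neg h0] at h; linarith

lemma headv_neg (v : E (d + 1)) : headv (-v) = -headv v := by
  ext i; simp [headv_apply, PiLp.neg_apply]
lemma last_neg (v : E (d + 1)) : (-v) (Fin.last d) = -(v (Fin.last d)) := by
  simp [PiLp.neg_apply]
lemma xng_neg {v : E (d + 1)} (h : Xng v) : Xng (-v) := by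
  unfold Xng at *; rw [headv_neg, last_neg, norm_neg, abs_neg]; exact h

lemma posv_aff_nonneg {v : E (d + 1)} (h : Posv v) {x : E d} (hx : ‖x‖ ≤ 1) :
    0 ≤ aff x v := by
  rw [aff_eq_inner]
  have h1 : |⟪x, headv v⟫| ≤ ‖x‖ * ‖headv v‖ := abs_real_inner_le_norm x (headv v)
  have h2 : ‖x‖ * ‖headv v‖ ≤ ‖headv v‖ := by
    have := norm_nonneg (headv v); nlinarith
  have := abs_le.1 (h1.trans h2)
  unfold Posv at h; linarith

lemma negv_aff_nonpos {v : E (d + 1)} (h : Negv v) {x : E d} (hx : ‖x‖ ≤ 1) :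
    aff x v ≤ 0 := by
  have h' : Posv (-v) := by
    unfold Posv; rw [headv_neg, last_neg, norm_neg]; unfold Negv at h; linarith
  have := posv_aff_nonneg h' hx; rw [aff_neg] at this; linarith

lemma xng_not_posv {v : E (d + 1)} (h : Xng v) : ¬ Posv v := by
  unfold Xng Posv at *; intro h'
  have := le_abs_self (v (Fin.last d)); linarith

/-- canonical representative among {v, -v} -/
noncomputable def vord {d : ℕ} : LinearOrder (E (d + 1)) := IsWellOrder.linearOrder WellOrderingRel
noncomputable def can (v : E (d + 1)) : E (d + 1) := if vord.le v (-v) then -v else v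

lemma can_eq_or (v : E (d + 1)) : can v = v ∨ can v = -v := by
  unfold can; split
  · exact Or.inr rfl
  · exact Or.inl rfl

lemma can_neg (v : E (d + 1)) : can (-v) = can v := by
  unfold can
  by_cases h1 : vord.le v (-v)
  · rw [if_pos h1]
    by_cases h2 : vord.le (-v) (- -v)
    · rw [if_pos h2, neg_neg]
      have h2' : vord.le (-v) v := by rw [neg_neg] at h2; exact h2
      have hv := vord.le_antisymm _ _ h1 h2'
      rw [← hv]
    · rw [if_neg h2]
  · rw [if_neg h1]
    have h2 : vord.le (-v) (- -v) := by
      rw [neg_neg]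
      rcases vord.le_total v (-v) with h | h
      · exact absurd h h1
      · exact h
    rw [if_pos h2, neg_neg]

lemma can_can (v : E (d + 1)) : can (can v) = can v := by
  rcases can_eq_or v with h | h
  · rw [h]; exact h
  · rw [h, can_neg, ← h]

lemma norm_can (v : E (d + 1)) : ‖can v‖ = ‖v‖ := by
  rcases can_eq_or v with h | h <;> simp [h]

lemma xng_can {v : E (d + 1)} (h : Xng v) : Xng (can v) := by
  rcases can_eq_or v with h' | h' <;> rw [h']
  · exact h
  · exact xng_neg h

lemma can_eq_of_eq_neg {z z' : E (d + 1)} (hz : can z = z) (hz' : can z' = z')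
    (h : z = -z') : z = z' := by
  rw [← hz, h, can_neg, hz']
end Trichotomy
section Merged
open scoped Classical
variable {d n : ℕ}

/-- set of canonical crossing directions appearing in a representation -/
noncomputable def Ufin (u : Fin n → E (d + 1)) : Finset (E (d + 1)) :=
  (Finset.univ.filter fun j => Xng (u j)).image fun j => can (u j)

/-- aggregated coefficient at a canonical direction -/
noncomputable def lamF (b : Fin n → ℝ) (u : Fin n → E (d + 1)) (z : E (d + 1)) : ℝ :=
  ∑ j ∈ Finset.univ.filter (fun j => Xng (u j) ∧ can (u j) = z), b j

/-- affine residue of neuron j after canonicalization -/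
noncomputable def wresF (b : Fin n → ℝ) (u : Fin n → E (d + 1)) (j : Fin n) : E (d + 1) :=
  if Posv (u j) then b j • u j
  else if Xng (u j) ∧ u j ≠ can (u j) then (-(b j)) • can (u j) else 0

/-- total affine part -/
noncomputable def WvF (b : Fin n → ℝ) (u : Fin n → E (d + 1)) : E (d + 1) :=
  ∑ j, wresF b u j

lemma xng_ne_zero {v : E (d + 1)} (h : Xng v) : v ≠ 0 := by
  intro h0; unfold Xng at h; rw [h0] at h
  have h1 : headv (0 : E (d + 1)) = 0 := by ext i; simp [headv_apply, PiLp.zero_apply]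
  rw [h1] at h; simp [PiLp.zero_apply] at h

lemma flipped_iff {v : E (d + 1)} (h : Xng v) (hc : can v = -v) : v ≠ can v := by
  intro he
  have hv : v = -v := he.trans hc
  have h2 : (2 : ℝ) • v = 0 := by
    rw [two_smul]; nth_rewrite 2 [hv]; simp
  have hne := xng_ne_zero h
  apply hne
  have h3 := congrArg (fun w => (2 : ℝ)⁻¹ • w) h2
  simpa [smul_smul] using h3

/-- key per-neuron identity -/
lemma neuron_split (b : Fin n → ℝ) (u : Fin n → E (d + 1)) (j : Fin n)
    {x : E d} (hx : ‖x‖ ≤ 1) :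
    b j * relu (aff x (u j)) =
      (if Xng (u j) then b j * relu (aff x (can (u j))) else 0) + aff x (wresF b u j) := by
  by_cases hX : Xng (u j)
  · rw [if_pos hX]
    have hP : ¬ Posv (u j) := xng_not_posv hX
    rcases can_eq_or (u j) with hc | hc
    · rw [wresF, if_neg hP, if_neg (fun hcon => hcon.2 hc.symm)]
      rw [aff_zero, hc]; ring
    · have hne : u j ≠ can (u j) := flipped_iff hX hc
      rw [wresF, if_neg hP, if_pos ⟨hX, hne⟩]
      have e1 : aff x (can (u j)) = -aff x (u j) := by rw [hc, aff_neg]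
      have e2 : relu (aff x (can (u j))) - aff x (can (u j)) = relu (aff x (u j)) := by
        rw [e1, relu_neg_eq]; ring
      rw [aff_smul]
      rw [← e2]; ring
  · rw [if_neg hX]
    by_cases hP : Posv (u j)
    · rw [wresF, if_pos hP, aff_smul]
      rw [relu_of_nonneg (posv_aff_nonneg hP hx)]; ring
    · have hN : Negv (u j) := by
        rcases trichotomy (u j) with h | h | h
        · exact absurd h hX
        · exact absurd h hP
        · exact h
      rw [wresF, if_neg hP, if_neg (by intro h; exact hX h.1)]
      rw [relu_of_nonpos (negv_aff_nonpos hN hx), aff_zero]; ring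

/-- M1 : the merged form of a representation -/
lemma merged_eq (b : Fin n → ℝ) (u : Fin n → E (d + 1)) {x : E d} (hx : ‖x‖ ≤ 1) :
    ∑ j, b j * relu (aff x (u j)) =
      ∑ z ∈ Ufin u, lamF b u z * relu (aff x z) + aff x (WvF b u) := by
  have h2 : aff x (WvF b u) = ∑ j, aff x (wresF b u j) := aff_finset_sum _ _ _
  have h1 : ∑ z ∈ Ufin u, lamF b u z * relu (aff x z)
      = ∑ j ∈ Finset.univ.filter (fun j => Xng (u j)), b j * relu (aff x (can (u j))) := by
    rw [← Finset.sum_fiberwise_of_maps_to (g := fun j => can (u j))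
      (t := Ufin u) (fun j hj => Finset.mem_image_of_mem _ hj)]
    apply Finset.sum_congr rfl
    intro z _
    rw [lamF, Finset.sum_mul, Finset.filter_filter]
    apply Finset.sum_congr rfl
    intro j hj
    rw [Finset.mem_filter] at hj
    rw [hj.2.2]
  calc ∑ j, b j * relu (aff x (u j))
      = ∑ j, ((if Xng (u j) then b j * relu (aff x (can (u j))) else 0)
          + aff x (wresF b u j)) := by
        apply Finset.sum_congr rfl; intro j _; exact neuron_split b u j hx
    _ = ∑ j, (if Xng (u j) then b j * relu (aff x (can (u j))) else 0)
          + ∑ j, aff x (wresF b u j) := Finset.sum_add_distrib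
    _ = ∑ z ∈ Ufin u, lamF b u z * relu (aff x z) + aff x (WvF b u) := by
        rw [← Finset.sum_filter, ← h1, ← h2]

/-- M3 : mass bound for aggregated coefficients -/
lemma sum_abs_lam_le (b : Fin n → ℝ) (u : Fin n → E (d + 1)) :
    ∑ z ∈ Ufin u, |lamF b u z| ≤ ∑ j, |b j| := by
  have h1 : ∀ z ∈ Ufin u, |lamF b u z| ≤
      ∑ j ∈ Finset.univ.filter (fun j => Xng (u j) ∧ can (u j) = z), |b j| :=
    fun z _ => Finset.abs_sum_le_sum_abs _ _
  calc ∑ z ∈ Ufin u, |lamF b u z|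
      ≤ ∑ z ∈ Ufin u, ∑ j ∈ Finset.univ.filter (fun j => Xng (u j) ∧ can (u j) = z), |b j| :=
        Finset.sum_le_sum h1
    _ = ∑ j ∈ Finset.univ.filter (fun j => Xng (u j)), |b j| := by
        rw [← Finset.sum_fiberwise_of_maps_to (g := fun j => can (u j))
          (t := Ufin u) (fun j hj => Finset.mem_image_of_mem _ hj)]
        apply Finset.sum_congr rfl
        intro z _
        rw [Finset.filter_filter]
    _ ≤ ∑ j, |b j| := Finset.sum_le_sum_of_subset_of_nonneg (Finset.filter_subset _ _)
        (fun j _ _ => abs_nonneg _)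

lemma lam_eq_zero_of_not_mem (b : Fin n → ℝ) (u : Fin n → E (d + 1)) {z : E (d + 1)}
    (hz : z ∉ Ufin u) : lamF b u z = 0 := by
  apply Finset.sum_eq_zero
  intro j hj
  rw [Finset.mem_filter] at hj
  exact absurd (hj.2.2 ▸ Finset.mem_image_of_mem (fun j => can (u j))
    (Finset.mem_filter.2 ⟨Finset.mem_univ j, hj.2.1⟩)) hz

/-- M2 : the affine part, corrected by any set of canonical flips, is bounded -/
lemma wv_add_lam_bound (b : Fin n → ℝ) (u : Fin n → E (d + 1)) (F : Finset (E (d + 1))) :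
    ‖WvF b u + ∑ z ∈ F, lamF b u z • z‖ ≤ ∑ j, |b j| * ‖u j‖ := by
  have h1 : ∑ z ∈ F, lamF b u z • z =
      ∑ j, (if Xng (u j) ∧ can (u j) ∈ F then b j • can (u j) else (0 : E (d + 1))) := by
    rw [← Finset.sum_filter]
    rw [← Finset.sum_fiberwise_of_maps_to
      (g := fun j : Fin n => can (u j)) (t := F)
      (fun j hj => (Finset.mem_filter.1 hj).2.2)]
    apply Finset.sum_congr rfl
    intro z hz
    rw [lamF, Finset.sum_smul, Finset.filter_filter]
    apply Finset.sum_congr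
    · apply Finset.filter_congr; intro j _
      constructor
      · intro h; exact ⟨⟨h.1, h.2 ▸ hz⟩, h.2⟩
      · intro h; exact ⟨h.1.1, h.2⟩
    · intro j hj
      rw [Finset.mem_filter] at hj
      rw [hj.2.2]
  rw [h1, WvF, ← Finset.sum_add_distrib]
  refine le_trans (norm_sum_le _ _) (Finset.sum_le_sum ?_)
  intro j _
  by_cases hP : Posv (u j)
  · have hX : ¬ Xng (u j) := fun h => xng_not_posv h hP
    rw [wresF, if_pos hP, if_neg (by tauto)]
    rw [add_zero, norm_smul]; simp [Real.norm_eq_abs]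
  · by_cases hX : Xng (u j)
    · rcases can_eq_or (u j) with hc | hc
      · rw [wresF, if_neg hP, if_neg (fun hcon => hcon.2 hc.symm)]
        by_cases hF : can (u j) ∈ F
        · rw [if_pos ⟨hX, hF⟩, zero_add, norm_smul, norm_can]; simp [Real.norm_eq_abs]
        · rw [if_neg (by tauto), add_zero, norm_zero]
          positivity
      · have hne : u j ≠ can (u j) := flipped_iff hX hc
        rw [wresF, if_neg hP, if_pos ⟨hX, hne⟩]
        by_cases hF : can (u j) ∈ F
        · rw [if_pos ⟨hX, hF⟩, neg_smul, neg_add_cancel, norm_zero]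
          positivity
        · rw [if_neg (by tauto), add_zero, norm_smul, norm_can]; simp [Real.norm_eq_abs]
    · rw [wresF, if_neg hP, if_neg (by tauto)]
      by_cases hF : Xng (u j) ∧ can (u j) ∈ F
      · exact absurd hF.1 hX
      · rw [if_neg hF, add_zero, norm_zero]; positivity

end Merged
section Unique
open RealInnerProductSpace
variable {d : ℕ}

lemma headv_smul (r : ℝ) (v : E (d + 1)) : headv (r • v) = r • headv v := by
  ext i; simp [headv_apply, PiLp.smul_apply]

lemma last_smul (r : ℝ) (v : E (d + 1)) : (r • v) (Fin.last d) = r * v (Fin.last d) := by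
  simp [PiLp.smul_apply]

lemma eq_of_head_last {a b : E (d + 1)} (h1 : headv a = headv b)
    (h2 : a (Fin.last d) = b (Fin.last d)) : a = b := by
  ext k
  rcases Fin.eq_castSucc_or_eq_last k with ⟨i, rfl⟩ | rfl
  · have := congrArg (fun w : E d => w i) h1; simpa [headv_apply] using this
  · exact h2

lemma norm_sq_split (v : E (d + 1)) :
    ‖v‖ ^ 2 = ‖headv v‖ ^ 2 + (v (Fin.last d)) ^ 2 := by
  rw [EuclideanSpace.norm_eq, EuclideanSpace.norm_eq]
  rw [Real.sq_sqrt (by positivity), Real.sq_sqrt (by positivity)]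
  rw [Fin.sum_univ_castSucc]
  simp [headv_apply, sq_abs]

lemma norm_headv_le (v : E (d + 1)) : ‖headv v‖ ≤ ‖v‖ := by
  have h := norm_sq_split v
  nlinarith [norm_nonneg (headv v), norm_nonneg v, sq_nonneg (v (Fin.last d))]

lemma aff_w_zero {w : E (d + 1)} (h : ∀ x : E d, ‖x‖ ≤ 1 → aff x w = 0) : w = 0 := by
  have hlast : w (Fin.last d) = 0 := by
    have h0 := h 0 (by simp)
    simpa [aff, PiLp.zero_apply] using h0
  apply eq_of_head_last
  · ext i
    have hi := h (EuclideanSpace.single i 1) (by rw [EuclideanSpace.norm_single]; simp)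
    rw [aff, hlast, add_zero] at hi
    rw [Finset.sum_eq_single i (fun k _ hk => by
      rw [EuclideanSpace.single_apply, if_neg hk, zero_mul])
      (fun hx => absurd (Finset.mem_univ i) hx)] at hi
    rw [EuclideanSpace.single_apply, if_pos rfl, one_mul] at hi
    simpa [headv_apply, PiLp.zero_apply] using hi
  · simpa [PiLp.zero_apply] using hlast

lemma relu_sym {A B : ℝ} (h : |B| < |A|) : relu (A + B) + relu (A - B) = 2 * relu A := by
  rcases abs_lt.1 h with ⟨h1, h2⟩
  rcases lt_or_ge 0 A with hA | hA
  · rw [abs_of_pos hA] at h1 h2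
    rw [relu_of_nonneg (by linarith), relu_of_nonneg (by linarith),
      relu_of_nonneg hA.le]; ring
  · rcases eq_or_lt_of_le hA with h' | h'
    · exfalso; rw [h'] at h; rw [abs_zero] at h; linarith [abs_nonneg B]
    · rw [abs_of_neg h'] at h1 h2
      rw [relu_of_nonpos (by linarith), relu_of_nonpos (by linarith),
        relu_of_nonpos h'.le]; ring

/-- a proper "hyperplane" `{y | ⟪y,a⟫ = c}` is a null set -/
lemma hyperplane_null (a : E d) (ha : a ≠ 0) (c : ℝ) :
    volume {y : E d | ⟪y, a⟫ = c} = 0 := by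
  set K : Submodule ℝ (E d) := LinearMap.ker (innerSL ℝ a : E d →ₗ[ℝ] ℝ) with hK
  have hKtop : K ≠ ⊤ := by
    intro htop
    have : a ∈ K := htop ▸ Submodule.mem_top
    rw [hK, LinearMap.mem_ker] at this
    simp only [ContinuousLinearMap.coe_coe, innerSL_apply_apply] at this
    exact ha (inner_self_eq_zero.1 this)
  have hnull : volume (K : Set (E d)) = 0 :=
    MeasureTheory.Measure.addHaar_submodule volume K hKtop
  set y₀ : E d := (c / ‖a‖ ^ 2) • a with hy₀
  have hna : ‖a‖ ^ 2 ≠ 0 := by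
    have := norm_pos_iff.2 ha; positivity
  have hset : {y : E d | ⟪y, a⟫ = c} = (fun y => -y₀ + y) ⁻¹' (K : Set (E d)) := by
    ext y
    simp only [Set.mem_setOf_eq, Set.mem_preimage, SetLike.mem_coe, hK, LinearMap.mem_ker,
      ContinuousLinearMap.coe_coe, innerSL_apply_apply]
    have hinner : ⟪a, -y₀ + y⟫ = ⟪y, a⟫ - c := by
      rw [inner_add_right, inner_neg_right, hy₀, real_inner_smul_right,
        real_inner_self_eq_norm_sq]
      rw [real_inner_comm]
      field_simp
      ring
    rw [hinner]
    constructor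
    · intro h; rw [h]; ring
    · intro h; linarith [h]
  rw [hset, measure_preimage_add]
  exact hnull

/-- existence of a point on the hyperplane of z₀, inside the ball, avoiding the
hyperplanes of finitely many other directions -/
lemma exists_good_point (z₀ : E (d + 1)) (hz : Xng z₀) (hz₀u : ‖z₀‖ = 1)
    (t' : Finset (E (d + 1))) (ht : ∀ z ∈ t', ‖z‖ = 1 ∧ z ≠ z₀ ∧ z ≠ -z₀) :
    ∃ p : E d, ‖p‖ < 1 ∧ aff p z₀ = 0 ∧ ∀ z ∈ t', aff p z ≠ 0 := by
  classical
  set h₀ : E d := headv z₀ with hh₀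
  have hzz : |z₀ (Fin.last d)| < ‖h₀‖ := hz
  have hc₀ : 0 < ‖h₀‖ := lt_of_le_of_lt (abs_nonneg _) hzz
  have hc₀' : ‖h₀‖ ≠ 0 := ne_of_gt hc₀
  set p₀ : E d := (-(z₀ (Fin.last d)) / ‖h₀‖ ^ 2) • h₀ with hp₀
  have haffp₀ : aff p₀ z₀ = 0 := by
    rw [aff_eq_inner, hp₀, real_inner_smul_left, real_inner_self_eq_norm_sq]
    field_simp
    ring
  have hp₀norm : ‖p₀‖ < 1 := by
    have h2 : ‖p₀‖ * ‖h₀‖ = |z₀ (Fin.last d)| := by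
      rw [hp₀, norm_smul, Real.norm_eq_abs, abs_div, abs_neg,
        abs_of_nonneg (by positivity : (0:ℝ) ≤ ‖h₀‖ ^ 2)]
      field_simp
    nlinarith [norm_nonneg p₀]
  set nn : E d := ‖h₀‖⁻¹ • h₀ with hnn
  have hinn : ⟪nn, h₀⟫ = ‖h₀‖ := by
    rw [hnn, real_inner_smul_left, real_inner_self_eq_norm_sq]
    field_simp
  set φ : E d → E d := fun y => p₀ + (y - ⟪y, nn⟫ • nn) with hφ
  set P : E (d + 1) → E d := fun z => headv z - ⟪nn, headv z⟫ • nn with hP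
  have key : ∀ (y : E d) (z : E (d + 1)), aff (φ y) z = aff p₀ z + ⟪y, P z⟫ := by
    intro y z
    rw [aff_eq_inner, aff_eq_inner, hφ, hP]
    simp only [inner_add_left, inner_sub_left, inner_sub_right, real_inner_smul_left,
      real_inner_smul_right]
    ring
  have hPz₀ : P z₀ = 0 := by
    simp only [hP]
    rw [← hh₀, hinn, hnn, smul_smul, mul_inv_cancel₀ hc₀', one_smul, sub_self]
  have hnull : ∀ z ∈ t', volume {y : E d | aff (φ y) z = 0} = 0 := by
    intro z hzt
    by_cases hPz : P z = 0
    · have hempty : {y : E d | aff (φ y) z = 0} = ∅ := by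
        rw [Set.eq_empty_iff_forall_notMem]
        intro y hy
        rw [Set.mem_setOf_eq, key, hPz, inner_zero_right, add_zero] at hy
        simp only [hP] at hPz
        have h3 : headv z = ⟪nn, headv z⟫ • nn := sub_eq_zero.1 hPz
        have hhz : headv z = (⟪nn, headv z⟫ * ‖h₀‖⁻¹) • h₀ := by
          conv_lhs => rw [h3]
          rw [hnn, smul_smul]
        set c' : ℝ := ⟪nn, headv z⟫ * ‖h₀‖⁻¹ with hc'
        have hip : ⟪p₀, h₀⟫ = -(z₀ (Fin.last d)) := by
          have h4 := haffp₀
          rw [aff_eq_inner, ← hh₀] at h4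
          linarith
        have hy4 : c' * ⟪p₀, h₀⟫ + z (Fin.last d) = 0 := by
          rw [aff_eq_inner, hhz, real_inner_smul_right] at hy
          exact hy
        have hlastz : z (Fin.last d) = c' * z₀ (Fin.last d) := by
          rw [hip] at hy4; linarith
        have hzeq : z = c' • z₀ := by
          apply eq_of_head_last
          · rw [headv_smul, ← hh₀, ← hhz]
          · rw [last_smul, hlastz]
        have hcnorm : |c'| = 1 := by
          have h5 : ‖z‖ = ‖c' • z₀‖ := by rw [← hzeq]
          rw [norm_smul, Real.norm_eq_abs, hz₀u, mul_one, (ht z hzt).1] at h5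
          exact h5.symm
        rcases abs_eq (le_of_lt one_pos) |>.1 hcnorm with hc1 | hc1
        · exact (ht z hzt).2.1 (by rw [hzeq, hc1, one_smul])
        · exact (ht z hzt).2.2 (by rw [hzeq, hc1, neg_one_smul])
      rw [hempty]; exact measure_empty
    · have hset2 : {y : E d | aff (φ y) z = 0} = {y : E d | ⟪y, P z⟫ = -(aff p₀ z)} := by
        ext y
        rw [Set.mem_setOf_eq, Set.mem_setOf_eq, key]
        constructor
        · intro h; linarith
        · intro h; linarith
      rw [hset2]
      exact hyperplane_null (P z) hPz _
  have hUnull : volume (⋃ z ∈ t', {y : E d | aff (φ y) z = 0}) = 0 := by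
    refine le_antisymm (le_trans (MeasureTheory.measure_biUnion_finset_le _ _) ?_) zero_le
    rw [Finset.sum_congr rfl hnull]
    simp
  set r : ℝ := 1 - ‖p₀‖ with hr
  have hrpos : 0 < r := by rw [hr]; linarith
  have hball : 0 < volume (Metric.ball (0 : E d) r) := Metric.measure_ball_pos volume (0 : E d) hrpos
  have hex : ∃ y ∈ Metric.ball (0 : E d) r,
      y ∉ ⋃ z ∈ t', {y : E d | aff (φ y) z = 0} := by
    by_contra hcon
    push_neg at hcon
    have hsub : Metric.ball (0 : E d) r ⊆ ⋃ z ∈ t', {y : E d | aff (φ y) z = 0} := hcon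
    have hm : volume (Metric.ball (0 : E d) r)
        ≤ volume (⋃ z ∈ t', {y : E d | aff (φ y) z = 0}) :=
      MeasureTheory.measure_mono hsub
    rw [hUnull] at hm
    exact absurd (le_antisymm hm zero_le) (ne_of_gt hball)
  obtain ⟨y, hy1, hy2⟩ := hex
  have hyn : ‖y‖ < r := by rwa [Metric.mem_ball, dist_zero_right] at hy1
  have hproj : ‖y - ⟪y, nn⟫ • nn‖ ≤ ‖y‖ := by
    have hnn1 : ‖nn‖ = 1 := by
      rw [hnn, norm_smul, Real.norm_eq_abs, abs_inv, abs_of_pos hc₀, inv_mul_cancel₀ hc₀']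
    have hexp : ‖y - ⟪y, nn⟫ • nn‖ ^ 2 = ‖y‖ ^ 2 - ⟪y, nn⟫ ^ 2 := by
      rw [norm_sub_sq_real, real_inner_smul_right, norm_smul, Real.norm_eq_abs, hnn1,
        mul_one, sq_abs]
      ring
    nlinarith [norm_nonneg (y - ⟪y, nn⟫ • nn), norm_nonneg y, sq_nonneg (⟪y, nn⟫)]
  refine ⟨φ y, ?_, ?_, ?_⟩
  · have : ‖φ y‖ ≤ ‖p₀‖ + ‖y - ⟪y, nn⟫ • nn‖ := by
      rw [hφ]; exact norm_add_le _ _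
    have h6 : ‖y - ⟪y, nn⟫ • nn‖ < r := lt_of_le_of_lt hproj hyn
    rw [hr] at h6
    linarith
  · rw [key, haffp₀, hPz₀, inner_zero_right, add_zero]
  · intro z hzt hzero
    apply hy2
    rw [Set.mem_iUnion₂]
    exact ⟨z, hzt, hzero⟩

end Unique
section UniqueMain
open RealInnerProductSpace
variable {d : ℕ}

lemma relu_zero : relu (0 : ℝ) = 0 := relu_of_nonpos le_rfl

lemma rep_unique (t : Finset (E (d + 1))) (ht : ∀ z ∈ t, ‖z‖ = 1 ∧ Xng z ∧ can z = z)
    (μ : E (d + 1) → ℝ) (w : E (d + 1))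
    (h : ∀ x : E d, ‖x‖ ≤ 1 → (∑ z ∈ t, μ z * relu (aff x z)) + aff x w = 0) :
    (∀ z ∈ t, μ z = 0) ∧ w = 0 := by
  classical
  have hmu : ∀ z₀ ∈ t, μ z₀ = 0 := by
    intro z₀ hz₀
    obtain ⟨hz₀u, hz₀X, hz₀c⟩ := ht z₀ hz₀
    have ht' : ∀ z ∈ t.erase z₀, ‖z‖ = 1 ∧ z ≠ z₀ ∧ z ≠ -z₀ := by
      intro z hz
      obtain ⟨h1, h2, h3⟩ := ht z (Finset.mem_of_mem_erase hz)
      refine ⟨h1, Finset.ne_of_mem_erase hz, fun he => ?_⟩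
      exact (Finset.ne_of_mem_erase hz) (can_eq_of_eq_neg h3 hz₀c he)
    obtain ⟨p, hp1, hp2, hp3⟩ := exists_good_point z₀ hz₀X hz₀u (t.erase z₀) ht'
    have hzz : |z₀ (Fin.last d)| < ‖headv z₀‖ := hz₀X
    have hc₀ : 0 < ‖headv z₀‖ := lt_of_le_of_lt (abs_nonneg _) hzz
    set eh : E d := ‖headv z₀‖⁻¹ • headv z₀ with heh
    have heh1 : ‖eh‖ = 1 := by
      rw [heh, norm_smul, Real.norm_eq_abs, abs_inv, abs_of_pos hc₀,
        inv_mul_cancel₀ (ne_of_gt hc₀)]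
    have hBz₀ : ⟪eh, headv z₀⟫ = ‖headv z₀‖ := by
      rw [heh, real_inner_smul_left, real_inner_self_eq_norm_sq]
      field_simp
    have hBle : ∀ z : E (d + 1), ‖z‖ = 1 → |⟪eh, headv z⟫| ≤ 1 := by
      intro z hzu
      calc |⟪eh, headv z⟫| ≤ ‖eh‖ * ‖headv z‖ := abs_real_inner_le_norm _ _
        _ = ‖headv z‖ := by rw [heh1, one_mul]
        _ ≤ ‖z‖ := norm_headv_le z
        _ = 1 := hzu
    -- choice of the step size
    set δ₂ : ℝ := if hne : (t.erase z₀).Nonempty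
      then (t.erase z₀).inf' hne (fun z => |aff p z|) else 1 with hδ₂
    have hδ₂pos : 0 < δ₂ := by
      rw [hδ₂]
      split
      · rename_i hne
        rw [Finset.lt_inf'_iff]
        intro z hz
        exact abs_pos.2 (hp3 z hz)
      · exact one_pos
    have hδ₂le : ∀ z ∈ t.erase z₀, δ₂ ≤ |aff p z| := by
      intro z hz
      rw [hδ₂]
      have hne : (t.erase z₀).Nonempty := ⟨z, hz⟩
      rw [dif_pos hne]
      exact Finset.inf'_le _ hz
    set tt : ℝ := min (1 - ‖p‖) δ₂ / 2 with htt
    have httpos : 0 < tt := by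
      rw [htt]
      have : 0 < min (1 - ‖p‖) δ₂ := lt_min (by linarith) hδ₂pos
      linarith
    have htt1 : tt < 1 - ‖p‖ := by
      rw [htt]
      have h1 : min (1 - ‖p‖) δ₂ ≤ 1 - ‖p‖ := min_le_left _ _
      have : 0 < min (1 - ‖p‖) δ₂ := lt_min (by linarith) hδ₂pos
      linarith
    have htt2 : tt < δ₂ := by
      rw [htt]
      have h1 : min (1 - ‖p‖) δ₂ ≤ δ₂ := min_le_right _ _
      have : 0 < min (1 - ‖p‖) δ₂ := lt_min (by linarith) hδ₂pos
      linarith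
    -- the three evaluation points
    have hxp : ‖p + tt • eh‖ ≤ 1 := by
      calc ‖p + tt • eh‖ ≤ ‖p‖ + ‖tt • eh‖ := norm_add_le _ _
        _ = ‖p‖ + tt := by
            rw [norm_smul, Real.norm_eq_abs, abs_of_pos httpos, heh1, mul_one]
        _ ≤ 1 := by linarith
    have hxm : ‖p + (-tt) • eh‖ ≤ 1 := by
      calc ‖p + (-tt) • eh‖ ≤ ‖p‖ + ‖(-tt) • eh‖ := norm_add_le _ _
        _ = ‖p‖ + tt := by
            rw [norm_smul, Real.norm_eq_abs, abs_neg, abs_of_pos httpos, heh1, mul_one]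
        _ ≤ 1 := by linarith
    have haffpm : ∀ (s : ℝ) (z : E (d + 1)),
        aff (p + s • eh) z = aff p z + s * ⟪eh, headv z⟫ := by
      intro s z
      rw [aff_eq_inner, aff_eq_inner, inner_add_left, real_inner_smul_left]
      ring
    have e1 := h (p + tt • eh) hxp
    have e2 := h (p + (-tt) • eh) hxm
    have e3 := h p hp1.le
    have hsum : ∑ z ∈ t, μ z * (relu (aff p z + tt * ⟪eh, headv z⟫)
        + relu (aff p z - tt * ⟪eh, headv z⟫) - 2 * relu (aff p z)) = 0 := by
      have expand : ∀ z ∈ t, μ z * (relu (aff p z + tt * ⟪eh, headv z⟫)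
          + relu (aff p z - tt * ⟪eh, headv z⟫) - 2 * relu (aff p z))
          = μ z * relu (aff (p + tt • eh) z) + μ z * relu (aff (p + (-tt) • eh) z)
            - 2 * (μ z * relu (aff p z)) := by
        intro z _
        rw [haffpm, haffpm]
        ring_nf
      rw [Finset.sum_congr rfl expand]
      rw [Finset.sum_sub_distrib, Finset.sum_add_distrib, ← Finset.mul_sum]
      have q1 : ∑ z ∈ t, μ z * relu (aff (p + tt • eh) z) = -aff (p + tt • eh) w := by
        linarith
      have q2 : ∑ z ∈ t, μ z * relu (aff (p + (-tt) • eh) z) = -aff (p + (-tt) • eh) w := by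
        linarith
      have q3 : ∑ z ∈ t, μ z * relu (aff p z) = -aff p w := by
        linarith
      rw [q1, q2, q3, haffpm, haffpm]
      ring
    rw [← Finset.add_sum_erase _ _ hz₀] at hsum
    have hvanish : ∀ z ∈ t.erase z₀, μ z * (relu (aff p z + tt * ⟪eh, headv z⟫)
        + relu (aff p z - tt * ⟪eh, headv z⟫) - 2 * relu (aff p z)) = 0 := by
      intro z hz
      have hlt : |tt * ⟪eh, headv z⟫| < |aff p z| := by
        rw [abs_mul]
        have h1 := hBle z (ht' z hz).1
        have h2 := hδ₂le z hz
        have h3 : |tt| = tt := abs_of_pos httpos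
        nlinarith
      rw [relu_sym hlt]
      ring_nf
    rw [Finset.sum_eq_zero hvanish, add_zero] at hsum
    rw [hp2, hBz₀, zero_add, zero_sub, relu_zero,
      relu_of_nonneg (by positivity), relu_of_nonpos (by nlinarith), mul_zero, sub_zero] at hsum
    have hne0 : tt * ‖headv z₀‖ ≠ 0 := by positivity
    rcases mul_eq_zero.1 hsum with h' | h'
    · exact h'
    · rw [add_zero] at h'
      exact absurd h' hne0
  refine ⟨hmu, ?_⟩
  apply aff_w_zero
  intro x hx
  have hh := h x hx
  rw [Finset.sum_eq_zero (fun z hz => by rw [hmu z hz, zero_mul]), zero_add] at hh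
  exact hh

end UniqueMain
section Normalize
open scoped Classical
variable {d N : ℕ}

/-- a fixed "positive" unit direction -/
noncomputable def ePos (d : ℕ) : E (d + 1) := EuclideanSpace.single (Fin.last d) 1

lemma ePos_norm : ‖ePos d‖ = 1 := by
  rw [ePos, EuclideanSpace.norm_single, norm_one]

/-- normalized coefficients of a network -/
noncomputable def normC (θ : Params d N) : Fin N → ℝ := fun i =>
  if θ.2 i = 0 then 0 else if Negv (‖θ.2 i‖⁻¹ • θ.2 i) then 0 else θ.1 i * ‖θ.2 i‖

/-- normalized (unit) directions of a network -/
noncomputable def normU (θ : Params d N) : Fin N → E (d + 1) := fun i =>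
  if θ.2 i = 0 then ePos d else if Negv (‖θ.2 i‖⁻¹ • θ.2 i) then ePos d
  else ‖θ.2 i‖⁻¹ • θ.2 i

lemma normU_unit (θ : Params d N) (i : Fin N) : ‖normU θ i‖ = 1 := by
  rw [normU]
  split
  · exact ePos_norm
  · split
    · exact ePos_norm
    · rename_i h0 _
      rw [norm_smul, Real.norm_eq_abs, abs_inv, abs_of_pos (norm_pos_iff.2 h0),
        inv_mul_cancel₀ (ne_of_gt (norm_pos_iff.2 h0))]

lemma normC_netFn (θ : Params d N) {x : E d} (hx : ‖x‖ ≤ 1) :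
    networkFn θ x = ∑ i, normC θ i * relu (aff x (normU θ i)) := by
  rw [networkFn]
  apply Finset.sum_congr rfl
  intro i _
  rw [normC, normU]
  by_cases h0 : θ.2 i = 0
  · rw [if_pos h0, if_pos h0, h0, aff_zero, relu_zero, mul_zero, zero_mul]
  · rw [if_neg h0, if_neg h0]
    have hpos : 0 < ‖θ.2 i‖ := norm_pos_iff.2 h0
    have hw : θ.2 i = ‖θ.2 i‖ • (‖θ.2 i‖⁻¹ • θ.2 i) := by
      rw [smul_smul, mul_inv_cancel₀ (ne_of_gt hpos), one_smul]
    have haff : aff x (θ.2 i) = ‖θ.2 i‖ * aff x (‖θ.2 i‖⁻¹ • θ.2 i) := by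
      conv_lhs => rw [hw]
      rw [aff_smul]
    by_cases hneg : Negv (‖θ.2 i‖⁻¹ • θ.2 i)
    · rw [if_pos hneg, if_pos hneg, zero_mul]
      rw [haff, relu_smul (le_of_lt hpos), relu_of_nonpos (negv_aff_nonpos hneg hx)]
      ring
    · rw [if_neg hneg, if_neg hneg]
      rw [haff, relu_smul (le_of_lt hpos)]
      ring

lemma normC_mass (θ : Params d N) : ∑ i, |normC θ i| ≤ pathNorm θ := by
  rw [pathNorm]
  apply Finset.sum_le_sum
  intro i _
  rw [normC]
  split
  · rw [abs_zero]; positivity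
  · split
    · rw [abs_zero]; positivity
    · rw [abs_mul, abs_of_nonneg (norm_nonneg _)]

lemma normC_active (θ : Params d N) (i : Fin N) (h : normC θ i ≠ 0) :
    Xng (normU θ i) ∨ Posv (normU θ i) := by
  rw [normC] at h
  rw [normU]
  by_cases h0 : θ.2 i = 0
  · rw [if_pos h0] at h; exact absurd rfl h
  · rw [if_neg h0] at h
    by_cases hneg : Negv (‖θ.2 i‖⁻¹ • θ.2 i)
    · rw [if_pos hneg] at h; exact absurd rfl h
    · rw [if_neg h0, if_neg hneg]
      rcases trichotomy (‖θ.2 i‖⁻¹ • θ.2 i) with hh | hh | hh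
      · exact Or.inl hh
      · exact Or.inr hh
      · exact absurd hh hneg

lemma wres_of_coeff_zero (b : Fin N → ℝ) (u : Fin N → E (d + 1)) (j : Fin N)
    (h : b j = 0) : wresF b u j = 0 := by
  rw [wresF]
  split
  · rw [h, zero_smul]
  · split
    · rw [h, neg_zero, zero_smul]
    · rfl

/-- Part 1 : kappaF f ≤ pathNorm θ for any realization θ -/
lemma kappaF_le_pathNorm (f : E d → ℝ) (θ : Params d N)
    (hθ : ∀ x : E d, ‖x‖ ≤ 1 → f x = networkFn θ x) :
    kappaF f ≤ pathNorm θ := by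
  have hmem : (∑ i, |normC θ i|) ∈ {s | ∃ (m : ℕ) (c : Fin m → ℝ) (v : Fin m → E (d + 1)),
      (∀ j, ‖v j‖ = 1) ∧ (∀ x : E d, ‖x‖ ≤ 1 → f x = ∑ j, c j * relu (aff x (v j))) ∧
      s = ∑ j, |c j|} := by
    exact ⟨N, normC θ, normU θ, normU_unit θ,
      fun x hx => (hθ x hx).trans (normC_netFn θ hx), rfl⟩
  have hbdd : BddBelow {s | ∃ (m : ℕ) (c : Fin m → ℝ) (v : Fin m → E (d + 1)),
      (∀ j, ‖v j‖ = 1) ∧ (∀ x : E d, ‖x‖ ≤ 1 → f x = ∑ j, c j * relu (aff x (v j))) ∧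
      s = ∑ j, |c j|} := by
    refine ⟨0, fun s hs => ?_⟩
    obtain ⟨m, c, v, _, _, rfl⟩ := hs
    positivity
  exact le_trans (csInf_le hbdd hmem) (normC_mass θ)

end Normalize
section Build
variable {d : ℕ}

lemma build_sum {M : Type*} [AddCommMonoid M] {N K : ℕ} (hK : K ≤ N)
    (g : Fin N → M) (g' : Fin K → M)
    (hg : ∀ (i : Fin N) (h : (i : ℕ) < K), g i = g' ⟨i, h⟩)
    (hg0 : ∀ i : Fin N, ¬((i : ℕ) < K) → g i = 0) :
    ∑ i, g i = ∑ k, g' k := by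
  classical
  set G : ℕ → M := fun n => if h : n < K then g' ⟨n, h⟩ else 0 with hG
  have h1 : ∑ i, g i = ∑ i : Fin N, G (i : ℕ) := by
    apply Finset.sum_congr rfl
    intro i _
    by_cases h : (i : ℕ) < K
    · rw [hG]; simp only [dif_pos h]; exact hg i h
    · rw [hG]; simp only [dif_neg h]; exact hg0 i h
  have h2 : ∑ k, g' k = ∑ k : Fin K, G (k : ℕ) := by
    apply Finset.sum_congr rfl
    intro k _
    rw [hG]; simp only [dif_pos k.isLt]
  rw [h1, h2, Fin.sum_univ_eq_sum_range, Fin.sum_univ_eq_sum_range]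
  symm
  apply Finset.sum_subset (Finset.range_subset_range.2 hK)
  intro n _ hn
  rw [Finset.mem_range, not_lt] at hn
  rw [hG]
  simp only [dif_neg (not_lt.2 hn)]

/-- Construction of a network from a finite set of directions plus an affine part. -/
lemma exists_theta_of_finset (N : ℕ) (D : Finset (E (d + 1))) (lam : E (d + 1) → ℝ)
    (Wc : E (d + 1)) (hcard : D.card + 2 ≤ N) (hunit : ∀ z ∈ D, ‖z‖ = 1) :
    ∃ θ : Params d N,
      (∀ x : E d, networkFn θ x = (∑ z ∈ D, lam z * relu (aff x z)) + aff x Wc) ∧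
      pathNorm θ = (∑ z ∈ D, |lam z|) + 2 * ‖Wc‖ := by
  classical
  set K := D.card with hKdef
  set eqv : Fin K ≃ {z // z ∈ D} := D.equivFin.symm with heqv
  set Θ : Fin N → ℝ × E (d + 1) := fun i =>
    if h : (i : ℕ) < K then (lam (eqv ⟨i, h⟩), (eqv ⟨i, h⟩ : E (d + 1)))
    else if (i : ℕ) = K then (1, Wc)
    else if (i : ℕ) = K + 1 then (-1, -Wc) else (0, 0) with hΘ
  have hKN : K + 2 ≤ N := hcard
  have hsum : ∀ (A : ℝ × E (d + 1) → ℝ), A (0, 0) = 0 →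
      ∑ i : Fin N, A (Θ i) =
        (∑ z ∈ D, A (lam z, z)) + A (1, Wc) + A (-1, -Wc) := by
    intro A hA0
    have htr : ∑ i : Fin N, A (Θ i) = ∑ k : Fin (K + 2), A (Θ (Fin.castLE hKN k)) := by
      apply build_sum hKN
      · intro i h
        have hv : ((Fin.castLE hKN (⟨(i : ℕ), h⟩ : Fin (K + 2))) : ℕ) = (i : ℕ) := rfl
        congr 1
      · intro i h
        simp only [hΘ]
        rw [dif_neg (by omega), if_neg (by omega), if_neg (by omega)]
        exact hA0
    rw [htr, Fin.sum_univ_castSucc, Fin.sum_univ_castSucc]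
    have e1 : Θ (Fin.castLE hKN (Fin.last (K + 1))) = (-1, -Wc) := by
      have hv : ((Fin.castLE hKN (Fin.last (K + 1))) : ℕ) = K + 1 := rfl
      simp only [hΘ]
      rw [dif_neg (by rw [hv]; omega), if_neg (by rw [hv]; omega), if_pos hv]
    have e2 : Θ (Fin.castLE hKN ((Fin.last K).castSucc)) = (1, Wc) := by
      have hv : ((Fin.castLE hKN ((Fin.last K).castSucc)) : ℕ) = K := rfl
      simp only [hΘ]
      rw [dif_neg (by rw [hv]; omega), if_pos hv]
    have e3 : ∀ k : Fin K, Θ (Fin.castLE hKN (k.castSucc.castSucc)) =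
        (lam (eqv k), (eqv k : E (d + 1))) := by
      intro k
      have hlt : ((Fin.castLE hKN (k.castSucc.castSucc)) : ℕ) < K := k.isLt
      simp only [hΘ]
      rw [dif_pos hlt]
      have : (⟨((Fin.castLE hKN (k.castSucc.castSucc)) : ℕ), hlt⟩ : Fin K) = k :=
        Fin.ext rfl
      rw [this]
    rw [e1, e2]
    have e4 : ∑ k : Fin K, A (Θ (Fin.castLE hKN (k.castSucc.castSucc)))
        = ∑ z ∈ D, A (lam z, z) := by
      rw [Finset.sum_congr rfl (fun k _ => by rw [e3 k])]
      rw [← Finset.sum_coe_sort D (fun z => A (lam z, z))]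
      exact Equiv.sum_comp eqv (fun zs => A (lam zs, (zs : E (d + 1))))
    rw [e4]
  refine ⟨(fun i => (Θ i).1, fun i => (Θ i).2), ?_, ?_⟩
  · intro x
    rw [networkFn]
    have := hsum (fun p => p.1 * relu (aff x p.2)) (by simp [aff_zero, relu_zero])
    simp only at this
    rw [this]
    rw [one_mul, aff_neg, neg_one_mul, relu_neg_eq]
    ring
  · rw [pathNorm]
    have := hsum (fun p => |p.1| * ‖p.2‖) (by simp)
    simp only at this
    rw [this]
    rw [Finset.sum_congr rfl (fun z hz => by rw [hunit z hz, mul_one])]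
    rw [norm_neg]
    simp only [abs_one, abs_neg, one_mul]
    ring

end Build
section Main
open scoped Classical
variable {d N : ℕ}

lemma Ufin_props {n : ℕ} (w : Fin n → E (d + 1)) (hw : ∀ j, ‖w j‖ = 1) :
    ∀ z ∈ Ufin w, ‖z‖ = 1 ∧ Xng z ∧ can z = z := by
  intro z hz
  obtain ⟨j, hj, rfl⟩ := Finset.mem_image.1 hz
  have hXj : Xng (w j) := (Finset.mem_filter.1 hj).2
  exact ⟨by rw [norm_can]; exact hw j, xng_can hXj, can_can _⟩

lemma main_construction (f : E d → ℝ)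
    (θ₀ : Params d N) (hθ₀ : ∀ x : E d, ‖x‖ ≤ 1 → f x = networkFn θ₀ x)
    {m : ℕ} (c : Fin m → ℝ) (v : Fin m → E (d + 1)) (hv : ∀ j, ‖v j‖ = 1)
    (hrep : ∀ x : E d, ‖x‖ ≤ 1 → f x = ∑ j, c j * relu (aff x (v j))) :
    ∃ θ : Params d N, (∀ x : E d, ‖x‖ ≤ 1 → f x = networkFn θ x) ∧
      pathNorm θ ≤ 3 * ∑ j, |c j| := by
  classical
  set s := ∑ j, |c j| with hs
  have hs0 : 0 ≤ s := Finset.sum_nonneg (fun j _ => abs_nonneg _)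
  set b := normC θ₀ with hb
  set u := normU θ₀ with hu
  have hbu : ∀ x : E d, ‖x‖ ≤ 1 → f x = ∑ i, b i * relu (aff x (u i)) :=
    fun x hx => (hθ₀ x hx).trans (normC_netFn θ₀ hx)
  have huunit : ∀ i, ‖u i‖ = 1 := normU_unit θ₀
  set lamc := lamF c v with hlamc
  set lamt := lamF b u with hlamt
  set Wc := WvF c v with hWc
  set Wt := WvF b u with hWt
  have hfc : ∀ x : E d, ‖x‖ ≤ 1 →
      f x = ∑ z ∈ Ufin v, lamc z * relu (aff x z) + aff x Wc :=
    fun x hx => (hrep x hx).trans (merged_eq c v hx)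
  have hft : ∀ x : E d, ‖x‖ ≤ 1 →
      f x = ∑ z ∈ Ufin u, lamt z * relu (aff x z) + aff x Wt :=
    fun x hx => (hbu x hx).trans (merged_eq b u hx)
  -- matching via uniqueness
  set T := Ufin v ∪ Ufin u with hT
  have hmatch := rep_unique T
    (by
      intro z hz
      rw [hT, Finset.mem_union] at hz
      rcases hz with hz | hz
      · exact Ufin_props v hv z hz
      · exact Ufin_props u huunit z hz)
    (fun z => lamc z - lamt z) (Wc - Wt)
    (by
      intro x hx
      have h1 : ∑ z ∈ T, lamc z * relu (aff x z) = ∑ z ∈ Ufin v, lamc z * relu (aff x z) :=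
        (Finset.sum_subset Finset.subset_union_left
          (fun z _ hzn => by rw [hlamc, lam_eq_zero_of_not_mem c v hzn, zero_mul])).symm
      have h2 : ∑ z ∈ T, lamt z * relu (aff x z) = ∑ z ∈ Ufin u, lamt z * relu (aff x z) :=
        (Finset.sum_subset Finset.subset_union_right
          (fun z _ hzn => by rw [hlamt, lam_eq_zero_of_not_mem b u hzn, zero_mul])).symm
      have h3 : aff x (Wc - Wt) = aff x Wc - aff x Wt := by
        rw [sub_eq_add_neg, aff_add, aff_neg]; ring
      have h4 : ∑ z ∈ T, (lamc z - lamt z) * relu (aff x z)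
          = ∑ z ∈ T, lamc z * relu (aff x z) - ∑ z ∈ T, lamt z * relu (aff x z) := by
        rw [← Finset.sum_sub_distrib]
        exact Finset.sum_congr rfl (fun z _ => by ring)
      rw [h4, h1, h2, h3]
      have := hfc x hx
      have := hft x hx
      linarith)
  have hW : Wc = Wt := sub_eq_zero.1 hmatch.2
  have hlam : ∀ z, lamc z = lamt z := by
    intro z
    by_cases hz : z ∈ T
    · exact sub_eq_zero.1 (hmatch.1 z hz)
    · rw [hT, Finset.mem_union] at hz
      push_neg at hz
      rw [hlamc, hlamt, lam_eq_zero_of_not_mem c v hz.1, lam_eq_zero_of_not_mem b u hz.2]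
  -- c-side bounds
  have hMass : ∀ F : Finset (E (d + 1)), ‖Wc + ∑ z ∈ F, lamc z • z‖ ≤ s := by
    intro F
    have h1 := wv_add_lam_bound c v F
    rw [Finset.sum_congr rfl (fun j (_ : j ∈ Finset.univ) => by rw [hv j, mul_one])] at h1
    exact h1
  have hMassG : ∀ G : Finset (E (d + 1)), ∑ z ∈ G, |lamc z| ≤ s := by
    intro G
    calc ∑ z ∈ G, |lamc z| ≤ ∑ z ∈ G ∪ Ufin v, |lamc z| :=
          Finset.sum_le_sum_of_subset_of_nonneg Finset.subset_union_left
            (fun z _ _ => abs_nonneg _)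
      _ = ∑ z ∈ Ufin v, |lamc z| :=
          (Finset.sum_subset Finset.subset_union_right
            (fun z _ hzn => by rw [hlamc, lam_eq_zero_of_not_mem c v hzn, abs_zero])).symm
      _ ≤ s := sum_abs_lam_le c v
  set D := (Ufin v).filter (fun z => lamc z ≠ 0) with hD
  have hDprops : ∀ z ∈ D, ‖z‖ = 1 ∧ Xng z ∧ can z = z :=
    fun z hz => Ufin_props v hv z (Finset.mem_filter.1 hz).1
  by_cases hcase : D.card + 2 ≤ N
  · -- CASE A
    obtain ⟨θ, hθfn, hθnorm⟩ := exists_theta_of_finset N D lamc Wc hcase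
      (fun z hz => (hDprops z hz).1)
    refine ⟨θ, ?_, ?_⟩
    · intro x hx
      rw [hθfn x, hfc x hx]
      congr 1
      symm
      apply Finset.sum_subset (Finset.filter_subset _ _)
      intro z hz hzn
      have : lamc z = 0 := by
        by_contra hc
        exact hzn (Finset.mem_filter.2 ⟨hz, hc⟩)
      rw [this, zero_mul]
    · rw [hθnorm]
      have h1 : ∑ z ∈ D, |lamc z| ≤ s := hMassG D
      have h2 : ‖Wc‖ ≤ s := by
        have := hMass ∅
        simpa using this
      linarith
  · -- CASE B
    set GA := Finset.univ.filter (fun i : Fin N => Xng (u i) ∧ b i ≠ 0) with hGA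
    have hGAmem : ∀ i, i ∈ GA ↔ (Xng (u i) ∧ b i ≠ 0) := by
      intro i
      rw [hGA, Finset.mem_filter]
      simp
    have himg : D ⊆ GA.image (fun i => can (u i)) := by
      intro z hz
      have hzT : lamt z ≠ 0 := by rw [← hlam]; exact (Finset.mem_filter.1 hz).2
      have hzT' : (∑ j ∈ Finset.univ.filter (fun j => Xng (u j) ∧ can (u j) = z), b j) ≠ 0 :=
        hzT
      obtain ⟨j, hj, hbj⟩ := Finset.exists_ne_zero_of_sum_ne_zero hzT'
      rw [Finset.mem_filter] at hj
      exact Finset.mem_image.2 ⟨j, (hGAmem j).2 ⟨hj.2.1, hbj⟩, hj.2.2⟩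
    have hcardD : N - 1 ≤ D.card := by omega
    have hDGA : D.card ≤ GA.card :=
      le_trans (Finset.card_le_card himg) Finset.card_image_le
    have hGAN : GA.card ≤ N := by
      have := Finset.card_le_univ GA
      rwa [Fintype.card_fin] at this
    have hwresGA : ∀ i ∈ GA, wresF b u i =
        if u i ≠ can (u i) then (-(b i)) • can (u i) else 0 := by
      intro i hi
      rw [wresF, if_neg (xng_not_posv ((hGAmem i).1 hi).1)]
      by_cases hf : u i ≠ can (u i)
      · rw [if_pos ⟨((hGAmem i).1 hi).1, hf⟩, if_pos hf]
      · rw [if_neg (fun hc => hf hc.2), if_neg hf]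
    have hwres_nGA : ∀ i, i ∉ GA → wresF b u i = b i • u i := by
      intro i hi
      rw [hGAmem] at hi
      push_neg at hi
      by_cases hb0 : b i = 0
      · rw [wres_of_coeff_zero b u i hb0, hb0, zero_smul]
      · have hP : Posv (u i) := by
          rcases normC_active θ₀ i hb0 with hX | hP
          · exact absurd (hi hX) hb0
          · exact hP
        rw [wresF, if_pos hP]
    -- reusable pieces
    have hlamfib : ∀ z, lamt z =
        ∑ j ∈ Finset.univ.filter (fun j => Xng (u j) ∧ can (u j) = z), b j := fun z => rfl
    have flipsum : ∀ S : Finset (Fin N), (∀ i ∈ S, i ∈ GA) →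
        (∀ i ∈ S, b i = lamc (can (u i))) →
        (∀ i ∈ S, ∀ j ∈ S, can (u i) = can (u j) → i = j) →
        ∑ i ∈ S, wresF b u i =
          -∑ z ∈ (S.filter (fun i => u i ≠ can (u i))).image (fun i => can (u i)),
            lamc z • z := by
      intro S hSGA hSsing hSinj
      have h1 : ∑ z ∈ (S.filter (fun i => u i ≠ can (u i))).image (fun i => can (u i)),
          lamc z • z = ∑ i ∈ S.filter (fun i => u i ≠ can (u i)), lamc (can (u i)) • can (u i) :=
        Finset.sum_image (fun i hi j hj hij =>
          hSinj i (Finset.mem_of_mem_filter i hi) j (Finset.mem_of_mem_filter j hj) hij)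
      rw [h1]
      have h2 : ∀ i ∈ S, wresF b u i =
          if u i ≠ can (u i) then -(lamc (can (u i)) • can (u i)) else 0 := by
        intro i hi
        rw [hwresGA i (hSGA i hi)]
        by_cases hf : u i ≠ can (u i)
        · rw [if_pos hf, if_pos hf, ← hSsing i hi, neg_smul]
        · rw [if_neg hf, if_neg hf]
      rw [Finset.sum_congr rfl h2, Finset.sum_ite, Finset.sum_const_zero, add_zero,
        ← Finset.sum_neg_distrib]
    have singlesum : ∀ S : Finset (Fin N),
        (∀ i ∈ S, b i = lamc (can (u i))) →
        (∀ i ∈ S, ∀ j ∈ S, can (u i) = can (u j) → i = j) →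
        ∑ i ∈ S, |b i| = ∑ z ∈ S.image (fun i => can (u i)), |lamc z| := by
      intro S hSsing hSinj
      rw [Finset.sum_image hSinj]
      exact Finset.sum_congr rfl (fun i hi => by rw [hSsing i hi])
    have hsplitg : ∀ (M : Type) [AddCommMonoid M] (k₁ k₂ : Fin N) (_ : k₁ ≠ k₂)
        (g : Fin N → M),
        ∑ i, g i = g k₁ + (g k₂ + ∑ i ∈ (Finset.univ.erase k₁).erase k₂, g i) := by
      intro M _ k₁ k₂ hk g
      rw [← Finset.add_sum_erase _ g (Finset.mem_univ k₁)]
      congr 1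
      rw [← Finset.add_sum_erase _ g (Finset.mem_erase.2 ⟨Ne.symm hk, Finset.mem_univ k₂⟩)]
    by_cases hinj : ∀ i ∈ GA, ∀ j ∈ GA, can (u i) = can (u j) → i = j
    · -- all fibers are singletons
      have hsingle : ∀ i ∈ GA, b i = lamc (can (u i)) := by
        intro i hi
        rw [hlam, hlamfib]
        symm
        apply Finset.sum_eq_single_of_mem i
          (Finset.mem_filter.2 ⟨Finset.mem_univ i, ((hGAmem i).1 hi).1, rfl⟩)
        intro j hj hne
        rw [Finset.mem_filter] at hj
        by_contra hbj
        exact hne (hinj j ((hGAmem j).2 ⟨hj.2.1, hbj⟩) i hi hj.2.2)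
      have hGAsum : ∑ i ∈ GA, |b i| ≤ s := by
        rw [singlesum GA hsingle hinj]; exact hMassG _
      by_cases hGAuniv : GA = Finset.univ
      · -- B1 : the normalized network itself works
        refine ⟨(b, u), hbu, ?_⟩
        have hpn : pathNorm ((b, u) : Params d N) = ∑ i, |b i| * ‖u i‖ := rfl
        rw [hpn, Finset.sum_congr rfl (fun i (_ : i ∈ Finset.univ) => by
          rw [huunit, mul_one])]
        rw [← hGAuniv]
        linarith
      · -- B2 : one spare (inactive or positive) neuron
        have hGAlt : GA.card < N :=
          lt_of_le_of_ne hGAN (fun he => hGAuniv (Finset.eq_univ_of_card _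
            (by rw [he, Fintype.card_fin])))
        have hcard1 : (Finset.univ \ GA).card = 1 := by
          rw [Finset.card_sdiff_of_subset (Finset.subset_univ _), Finset.card_univ, Fintype.card_fin]
          omega
        obtain ⟨i₀, hi₀⟩ := Finset.card_eq_one.1 hcard1
        have hi₀n : i₀ ∉ GA := by
          have h5 : i₀ ∈ Finset.univ \ GA := by rw [hi₀]; exact Finset.mem_singleton_self i₀
          exact (Finset.mem_sdiff.1 h5).2
        have hWsplit : Wt = wresF b u i₀ + ∑ i ∈ GA, wresF b u i := by
          rw [hWt, WvF, ← Finset.sum_sdiff (Finset.subset_univ GA), hi₀, Finset.sum_singleton]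
        set FF := (GA.filter (fun i => u i ≠ can (u i))).image (fun i => can (u i)) with hFF
        have hρ : b i₀ • u i₀ = Wc + ∑ z ∈ FF, lamc z • z := by
          rw [hW, hWsplit, hwres_nGA i₀ hi₀n, flipsum GA (fun i hi => hi) hsingle hinj,
            ← hFF]
          abel
        have hbi₀ : |b i₀| ≤ s := by
          calc |b i₀| = ‖b i₀ • u i₀‖ := by
                rw [norm_smul, huunit, mul_one, Real.norm_eq_abs]
            _ = ‖Wc + ∑ z ∈ FF, lamc z • z‖ := by rw [hρ]
            _ ≤ s := hMass FF
        refine ⟨(b, u), hbu, ?_⟩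
        have hpn : pathNorm ((b, u) : Params d N) = ∑ i, |b i| * ‖u i‖ := rfl
        rw [hpn, Finset.sum_congr rfl (fun i (_ : i ∈ Finset.univ) => by
          rw [huunit, mul_one])]
        have h7 : ∑ i : Fin N, |b i| = |b i₀| + ∑ i ∈ GA, |b i| := by
          rw [← Finset.sum_sdiff (Finset.subset_univ GA), hi₀, Finset.sum_singleton]
        rw [h7]
        linarith
    · -- B3 : a doubled direction
      push_neg at hinj
      obtain ⟨i₁, hi₁, i₂, hi₂, hcaneq, hne12⟩ := hinj
      set zs := can (u i₁) with hzs
      have himg2 : GA.image (fun i => can (u i)) = (GA.erase i₂).image (fun i => can (u i)) := by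
        apply Finset.Subset.antisymm
        · intro z hz
          obtain ⟨k, hk, rfl⟩ := Finset.mem_image.1 hz
          by_cases hk2 : k = i₂
          · subst hk2
            exact Finset.mem_image.2 ⟨i₁, Finset.mem_erase.2 ⟨hne12, hi₁⟩, hcaneq⟩
          · exact Finset.mem_image_of_mem _ (Finset.mem_erase.2 ⟨hk2, hk⟩)
        · exact Finset.image_subset_image (Finset.erase_subset _ _)
      have hGA1 : 1 ≤ GA.card := Finset.card_pos.2 ⟨i₁, hi₁⟩
      have himgcard : (GA.image (fun i => can (u i))).card ≤ GA.card - 1 := by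
        rw [himg2]
        exact le_trans Finset.card_image_le (le_of_eq (Finset.card_erase_of_mem hi₂))
      have hDim : D.card ≤ (GA.image (fun i => can (u i))).card := Finset.card_le_card himg
      have hGAu : GA = Finset.univ := by
        apply Finset.eq_univ_of_card
        rw [Fintype.card_fin]
        omega
      have hallGA : ∀ i, i ∈ GA := fun i => by rw [hGAu]; exact Finset.mem_univ i
      have hallX : ∀ i, Xng (u i) := fun i => ((hGAmem i).1 (hallGA i)).1
      set fib : E (d + 1) → Finset (Fin N) :=
        fun z => Finset.univ.filter (fun j => Xng (u j) ∧ can (u j) = z) with hfib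
      have hfib_mem : ∀ i : Fin N, i ∈ fib (can (u i)) := fun i =>
        Finset.mem_filter.2 ⟨Finset.mem_univ i, hallX i, rfl⟩
      have hlamfib2 : ∀ z, lamt z = ∑ j ∈ fib z, b j := fun z => rfl
      have himgD : GA.image (fun i => can (u i)) = D :=
        (Finset.eq_of_subset_of_card_le himg (by omega)).symm
      have hfib_sum : ∑ z ∈ D, (fib z).card = N := by
        rw [← himgD]
        have h8 := Finset.card_eq_sum_card_fiberwise
          (f := fun i : Fin N => can (u i)) (s := Finset.univ)
          (t := GA.image (fun i => can (u i)))
          (fun i _ => Finset.mem_image_of_mem _ (hallGA i))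
        rw [Finset.card_univ, Fintype.card_fin] at h8
        have h9 : ∀ z, fib z = Finset.univ.filter (fun i => can (u i) = z) := by
          intro z
          rw [hfib]
          apply Finset.filter_congr
          intro i _
          simp [hallX i]
        rw [Finset.sum_congr rfl (fun z _ => by rw [h9 z])]
        exact h8.symm
      have hzsD : zs ∈ D := by rw [← himgD]; exact Finset.mem_image_of_mem _ (hallGA i₁)
      have hpairsub : ({i₁, i₂} : Finset (Fin N)) ⊆ fib zs := by
        intro k hk
        rcases Finset.mem_insert.1 hk with hk | hk
        · rw [hk]; exact hfib_mem i₁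
        · rw [Finset.mem_singleton] at hk
          rw [hk]
          have h11 := hfib_mem i₂
          rwa [← hcaneq] at h11
      have hfibzs2 : 2 ≤ (fib zs).card := by
        calc 2 = ({i₁, i₂} : Finset (Fin N)).card := (Finset.card_pair hne12).symm
          _ ≤ (fib zs).card := Finset.card_le_card hpairsub
      have hsum_erase : (fib zs).card + ∑ z ∈ D.erase zs, (fib z).card = N := by
        rw [Finset.add_sum_erase D (fun z => (fib z).card) hzsD]; exact hfib_sum
      have hDeq : D.card = (GA.image (fun i => can (u i))).card := by rw [himgD]
      have hDcard : D.card = N - 1 := by omega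
      have herasecard : (D.erase zs).card = N - 2 := by
        rw [Finset.card_erase_of_mem hzsD, hDcard]
        omega
      have hsum_ge : (D.erase zs).card ≤ ∑ z ∈ D.erase zs, (fib z).card := by
        rw [Finset.card_eq_sum_ones]
        apply Finset.sum_le_sum
        intro z hz
        have hzD : z ∈ D := Finset.mem_of_mem_erase hz
        rw [← himgD] at hzD
        obtain ⟨k, _, rfl⟩ := Finset.mem_image.1 hzD
        exact Finset.card_pos.2 ⟨k, hfib_mem k⟩
      have hfibcardle : (fib zs).card ≤ N := by
        have := Finset.card_le_univ (fib zs)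
        rwa [Fintype.card_fin] at this
      have hfibzs_eq2 : (fib zs).card = 2 := by omega
      have hfib_single : ∀ z ∈ D.erase zs, (fib z).card = 1 := by
        have hsum_eq : ∑ z ∈ D.erase zs, (fib z).card = N - 2 := by omega
        have hle1 : ∀ z ∈ D.erase zs, 1 ≤ (fib z).card := by
          intro z hz
          have hzD : z ∈ D := Finset.mem_of_mem_erase hz
          rw [← himgD] at hzD
          obtain ⟨k, _, rfl⟩ := Finset.mem_image.1 hzD
          exact Finset.card_pos.2 ⟨k, hfib_mem k⟩
        have h10 := (Finset.sum_eq_sum_iff_of_le hle1).1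
          (by rw [hsum_eq, ← herasecard, Finset.card_eq_sum_ones])
        intro z hz
        exact (h10 z hz).symm
      have hfibzs_set : fib zs = {i₁, i₂} :=
        (Finset.eq_of_subset_of_card_le hpairsub
          (le_of_eq (by rw [hfibzs_eq2, Finset.card_pair hne12]))).symm
      have hfib_singleton : ∀ i : Fin N, i ≠ i₁ → i ≠ i₂ → fib (can (u i)) = {i} := by
        intro i h1 h2
        have hzne : can (u i) ≠ zs := by
          intro he
          have h11 := hfib_mem i
          rw [he, hfibzs_set] at h11
          rcases Finset.mem_insert.1 h11 with h12 | h12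
          · exact h1 h12
          · exact h2 (Finset.mem_singleton.1 h12)
        have hziD : can (u i) ∈ D := by
          rw [← himgD]; exact Finset.mem_image_of_mem _ (hallGA i)
        have hc1 : (fib (can (u i))).card = 1 :=
          hfib_single _ (Finset.mem_erase.2 ⟨hzne, hziD⟩)
        obtain ⟨j, hj⟩ := Finset.card_eq_one.1 hc1
        have h13 : i ∈ ({j} : Finset (Fin N)) := by rw [← hj]; exact hfib_mem i
        rw [Finset.mem_singleton] at h13
        rw [hj, h13]
      have hsingle3 : ∀ i : Fin N, i ≠ i₁ → i ≠ i₂ → b i = lamc (can (u i)) := by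
        intro i h1 h2
        rw [hlam, hlamfib2, hfib_singleton i h1 h2, Finset.sum_singleton]
      have hzs_notin : ∀ S : Finset (Fin N), (∀ i ∈ S, i ≠ i₁ ∧ i ≠ i₂) →
          zs ∉ S.image (fun i => can (u i)) := by
        intro S hS hmem
        obtain ⟨k, hk, hke⟩ := Finset.mem_image.1 hmem
        have h14 := hfib_mem k
        rw [hke, hfibzs_set] at h14
        rcases Finset.mem_insert.1 h14 with h15 | h15
        · exact (hS k hk).1 h15
        · exact (hS k hk).2 (Finset.mem_singleton.1 h15)
      have hinjS : ∀ S : Finset (Fin N), (∀ i ∈ S, i ≠ i₁ ∧ i ≠ i₂) →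
          (∀ i ∈ S, ∀ j ∈ S, can (u i) = can (u j) → i = j) := by
        intro S hS i hi j hj hij
        have h16 := hfib_mem j
        rw [← hij, hfib_singleton i (hS i hi).1 (hS i hi).2] at h16
        exact (Finset.mem_singleton.1 h16).symm
      have hcanzs : can zs = zs := by rw [hzs, can_can]
      have hu1or : u i₁ = zs ∨ u i₁ = -zs := by
        rcases can_eq_or (u i₁) with h17 | h17
        · left; exact (hzs.trans h17).symm
        · right
          have h18 : zs = -u i₁ := hzs.trans h17
          rw [h18, neg_neg]
      have hu2or : u i₂ = zs ∨ u i₂ = -zs := by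
        have hzs2 : zs = can (u i₂) := hzs.trans hcaneq
        rcases can_eq_or (u i₂) with h17 | h17
        · left; exact (hzs2.trans h17).symm
        · right
          have h18 : zs = -u i₂ := hzs2.trans h17
          rw [h18, neg_neg]
      by_cases hsame : u i₁ = u i₂
      · -- B3(i) : same orientation, merge the two neurons
        set b' : Fin N → ℝ := fun i => if i = i₂ then 0 else if i = i₁ then b i₁ + b i₂
          else b i with hb'
        have hb'i1 : b' i₁ = b i₁ + b i₂ := by simp [hb', hne12]
        have hb'i2 : b' i₂ = 0 := by simp [hb']
        have hb'de : ∀ i : Fin N, i ≠ i₁ → i ≠ i₂ → b' i = b i := by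
          intro i h1 h2
          rw [hb']
          simp only [if_neg h2, if_neg h1]
        have hdeprop : ∀ i ∈ (Finset.univ.erase i₁).erase i₂, i ≠ i₁ ∧ i ≠ i₂ := by
          intro i hi
          exact ⟨Finset.ne_of_mem_erase (Finset.mem_of_mem_erase hi),
            Finset.ne_of_mem_erase hi⟩
        refine ⟨(b', u), ?_, ?_⟩
        · intro x hx
          rw [hbu x hx]
          have hnet : networkFn ((b', u) : Params d N) x = ∑ i, b' i * relu (aff x (u i)) :=
            rfl
          have htail : ∑ i ∈ (Finset.univ.erase i₁).erase i₂, b' i * relu (aff x (u i))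
              = ∑ i ∈ (Finset.univ.erase i₁).erase i₂, b i * relu (aff x (u i)) :=
            Finset.sum_congr rfl (fun i hi => by
              rw [hb'de i (hdeprop i hi).1 (hdeprop i hi).2])
          rw [hnet, hsplitg ℝ i₁ i₂ hne12 (fun i => b i * relu (aff x (u i))),
            hsplitg ℝ i₁ i₂ hne12 (fun i => b' i * relu (aff x (u i)))]
          rw [hb'i1, hb'i2, hsame, htail]
          ring
        · have hpn : pathNorm ((b', u) : Params d N) = ∑ i, |b' i| * ‖u i‖ := rfl
          rw [hpn, Finset.sum_congr rfl (fun i (_ : i ∈ Finset.univ) => by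
            rw [huunit, mul_one]), hsplitg ℝ i₁ i₂ hne12 (fun i => |b' i|)]
          have htail2 : ∑ i ∈ (Finset.univ.erase i₁).erase i₂, |b' i|
              = ∑ i ∈ (Finset.univ.erase i₁).erase i₂, |b i| :=
            Finset.sum_congr rfl (fun i hi => by
              rw [hb'de i (hdeprop i hi).1 (hdeprop i hi).2])
          rw [hb'i1, hb'i2, abs_zero, htail2]
          have hb12 : b i₁ + b i₂ = lamt zs := by
            rw [hlamfib2, hfibzs_set, Finset.sum_pair hne12]
          have h19 : |b i₁ + b i₂| = |lamc zs| := by rw [hb12, hlam]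
          have h20 : ∑ i ∈ (Finset.univ.erase i₁).erase i₂, |b i|
              = ∑ z ∈ ((Finset.univ.erase i₁).erase i₂).image (fun i => can (u i)),
                  |lamc z| :=
            singlesum _ (fun i hi => hsingle3 i (hdeprop i hi).1 (hdeprop i hi).2)
              (hinjS _ hdeprop)
          have h21 : |lamc zs| + ∑ i ∈ (Finset.univ.erase i₁).erase i₂, |b i| ≤ s := by
            rw [h20]
            have h22 := hMassG (insert zs (((Finset.univ.erase i₁).erase i₂).image
              (fun i => can (u i))))
            rwa [Finset.sum_insert (hzs_notin _ hdeprop)] at h22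
          rw [h19]
          linarith
      · -- B3(ii) : opposite orientations
        have hopp : u i₂ = -u i₁ := by
          rcases hu1or with h20 | h20 <;> rcases hu2or with h21 | h21
          · exact absurd (h20.trans h21.symm) hsame
          · rw [h21, ← h20]
          · rw [h21, h20, neg_neg]
          · exact absurd (h20.trans h21.symm) hsame
        obtain ⟨j₁, j₂, hjne, hj1u, hj2u, hjpair⟩ :
            ∃ j₁ j₂ : Fin N, j₁ ≠ j₂ ∧ u j₁ = zs ∧ u j₂ = -zs ∧
              ({i₁, i₂} : Finset (Fin N)) = {j₁, j₂} := by
          rcases hu1or with h20 | h20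
          · exact ⟨i₁, i₂, hne12, h20, by rw [hopp, h20], rfl⟩
          · refine ⟨i₂, i₁, Ne.symm hne12, ?_, h20, Finset.pair_comm i₁ i₂⟩
            rw [hopp, h20, neg_neg]
        have hfibj : fib zs = {j₁, j₂} := by rw [hfibzs_set, hjpair]
        have hbj12 : b j₁ + b j₂ = lamt zs := by
          rw [hlamfib2, hfibj, Finset.sum_pair hjne]
        have hne_iff : ∀ i : Fin N, (i ≠ j₁ ∧ i ≠ j₂) → (i ≠ i₁ ∧ i ≠ i₂) := by
          intro i hi
          have h22 : (i ∈ ({i₁, i₂} : Finset (Fin N))) ↔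
              (i ∈ ({j₁, j₂} : Finset (Fin N))) := by rw [hjpair]
          simp only [Finset.mem_insert, Finset.mem_singleton] at h22
          constructor
          · intro he
            rcases h22.1 (Or.inl he) with h | h
            · exact hi.1 h
            · exact hi.2 h
          · intro he
            rcases h22.1 (Or.inr he) with h | h
            · exact hi.1 h
            · exact hi.2 h
        have hde'prop : ∀ i ∈ (Finset.univ.erase j₁).erase j₂, i ≠ i₁ ∧ i ≠ i₂ := by
          intro i hi
          exact hne_iff i ⟨Finset.ne_of_mem_erase (Finset.mem_of_mem_erase hi),
            Finset.ne_of_mem_erase hi⟩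
        have hwj1 : wresF b u j₁ = 0 := by
          rw [hwresGA j₁ (hallGA j₁), if_neg (not_ne_iff.2 (by rw [hj1u, hcanzs]))]
        have hwj2 : wresF b u j₂ = -(b j₂) • zs := by
          have hc2 : can (u j₂) = zs := by rw [hj2u, can_neg, hcanzs]
          have hflip : u j₂ ≠ can (u j₂) :=
            flipped_iff (hallX j₂) (by rw [hc2, hj2u, neg_neg])
          rw [hwresGA j₂ (hallGA j₂), if_pos hflip, hc2]
        have hflipde : ∑ i ∈ (Finset.univ.erase j₁).erase j₂, wresF b u i =
            -∑ z ∈ ((((Finset.univ.erase j₁).erase j₂)).filter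
                (fun i => u i ≠ can (u i))).image (fun i => can (u i)), lamc z • z :=
          flipsum _ (fun i _ => hallGA i)
            (fun i hi => hsingle3 i (hde'prop i hi).1 (hde'prop i hi).2)
            (hinjS _ hde'prop)
        have hWteq : Wt = -(b j₂) • zs +
            (-∑ z ∈ ((((Finset.univ.erase j₁).erase j₂)).filter
                (fun i => u i ≠ can (u i))).image (fun i => can (u i)), lamc z • z) := by
          rw [hWt, WvF, hsplitg (E (d + 1)) j₁ j₂ hjne (fun i => wresF b u i)]
          rw [hwj1, hwj2, hflipde, zero_add]
        have hq : |b j₂| ≤ s := by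
          have h23 : Wc + ∑ z ∈ ((((Finset.univ.erase j₁).erase j₂)).filter
              (fun i => u i ≠ can (u i))).image (fun i => can (u i)), lamc z • z
              = -(b j₂ • zs) := by
            rw [hW, hWteq, neg_smul]
            abel
          calc |b j₂| = ‖b j₂ • zs‖ := by
                rw [norm_smul, (hDprops zs hzsD).1, mul_one, Real.norm_eq_abs]
            _ = ‖Wc + ∑ z ∈ ((((Finset.univ.erase j₁).erase j₂)).filter
                (fun i => u i ≠ can (u i))).image (fun i => can (u i)), lamc z • z‖ := by
                rw [h23, norm_neg]
            _ ≤ s := hMass _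
        refine ⟨(b, u), hbu, ?_⟩
        have hpn : pathNorm ((b, u) : Params d N) = ∑ i, |b i| * ‖u i‖ := rfl
        rw [hpn, Finset.sum_congr rfl (fun i (_ : i ∈ Finset.univ) => by
          rw [huunit, mul_one]), hsplitg ℝ j₁ j₂ hjne (fun i => |b i|)]
        have h24 : ∑ i ∈ (Finset.univ.erase j₁).erase j₂, |b i|
            = ∑ z ∈ ((Finset.univ.erase j₁).erase j₂).image (fun i => can (u i)),
                |lamc z| :=
          singlesum _ (fun i hi => hsingle3 i (hde'prop i hi).1 (hde'prop i hi).2)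
            (hinjS _ hde'prop)
        have h25 : |lamc zs| + ∑ i ∈ (Finset.univ.erase j₁).erase j₂, |b i| ≤ s := by
          rw [h24]
          have h28 := hMassG (insert zs (((Finset.univ.erase j₁).erase j₂).image
            (fun i => can (u i))))
          rwa [Finset.sum_insert (hzs_notin _ hde'prop)] at h28
        have h26 : |b j₁| ≤ |lamc zs| + |b j₂| := by
          have h27 : b j₁ = lamc zs - b j₂ := by
            rw [hlam]
            linarith [hbj12]
          rw [h27, sub_eq_add_neg]
          exact le_trans (abs_add_le _ _) (by rw [abs_neg])
        linarith

end Main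
/-- For f ∈ NN(N), κ(f) ≤ inf{κ(θ) : f_θ = f on B^d} ≤ 3κ(f). -/
theorem statement0 (d N : ℕ) (hd : 1 ≤ d) (hN : 1 ≤ N) (f : E d → ℝ)
    (hf : f ∈ NNclass d N) :
    kappaF f ≤
      sInf {s | ∃ θ : Params d N, (∀ x : E d, ‖x‖ ≤ 1 → f x = networkFn θ x) ∧ s = pathNorm θ} ∧
    sInf {s | ∃ θ : Params d N, (∀ x : E d, ‖x‖ ≤ 1 → f x = networkFn θ x) ∧ s = pathNorm θ} ≤
      3 * kappaF f := by
  classical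
  obtain ⟨θ₀, hθ₀⟩ := hf
  have hAne : {s | ∃ θ : Params d N, (∀ x : E d, ‖x‖ ≤ 1 → f x = networkFn θ x) ∧
      s = pathNorm θ}.Nonempty := ⟨pathNorm θ₀, θ₀, hθ₀, rfl⟩
  have hAbdd : BddBelow {s | ∃ θ : Params d N, (∀ x : E d, ‖x‖ ≤ 1 → f x = networkFn θ x) ∧
      s = pathNorm θ} := by
    refine ⟨0, fun sθ hsθ => ?_⟩
    obtain ⟨θ, _, rfl⟩ := hsθ
    rw [pathNorm]
    positivity
  have hk : kappaF f = sInf {s | ∃ (m : ℕ) (c : Fin m → ℝ) (v : Fin m → E (d + 1)),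
      (∀ j, ‖v j‖ = 1) ∧ (∀ x : E d, ‖x‖ ≤ 1 → f x = ∑ j, c j * relu (aff x (v j))) ∧
      s = ∑ j, |c j|} := rfl
  have hKne : {s | ∃ (m : ℕ) (c : Fin m → ℝ) (v : Fin m → E (d + 1)),
      (∀ j, ‖v j‖ = 1) ∧ (∀ x : E d, ‖x‖ ≤ 1 → f x = ∑ j, c j * relu (aff x (v j))) ∧
      s = ∑ j, |c j|}.Nonempty :=
    ⟨∑ i, |normC θ₀ i|, N, normC θ₀, normU θ₀, normU_unit θ₀,
      fun x hx => (hθ₀ x hx).trans (normC_netFn θ₀ hx), rfl⟩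
  constructor
  · apply le_csInf hAne
    intro sθ hsθ
    obtain ⟨θ, hθ, rfl⟩ := hsθ
    exact kappaF_le_pathNorm f θ hθ
  · have key : ∀ sk ∈ {s | ∃ (m : ℕ) (c : Fin m → ℝ) (v : Fin m → E (d + 1)),
        (∀ j, ‖v j‖ = 1) ∧ (∀ x : E d, ‖x‖ ≤ 1 → f x = ∑ j, c j * relu (aff x (v j))) ∧
        s = ∑ j, |c j|},
        sInf {s | ∃ θ : Params d N, (∀ x : E d, ‖x‖ ≤ 1 → f x = networkFn θ x) ∧
          s = pathNorm θ} ≤ 3 * sk := by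
      intro sk hsk
      obtain ⟨m, c, v, hvu, hrep, rfl⟩ := hsk
      obtain ⟨θ, hθfn, hθle⟩ := main_construction f θ₀ hθ₀ c v hvu hrep
      exact le_trans (csInf_le hAbdd ⟨θ, hθfn, rfl⟩) hθle
    rw [hk]
    have h3 : sInf {s | ∃ θ : Params d N, (∀ x : E d, ‖x‖ ≤ 1 → f x = networkFn θ x) ∧
        s = pathNorm θ} / 3 ≤ sInf {s | ∃ (m : ℕ) (c : Fin m → ℝ) (v : Fin m → E (d + 1)),
        (∀ j, ‖v j‖ = 1) ∧ (∀ x : E d, ‖x‖ ≤ 1 → f x = ∑ j, c j * relu (aff x (v j))) ∧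
        s = ∑ j, |c j|} := by
      apply le_csInf hKne
      intro sk hsk
      linarith [key sk hsk]
    linarith
end
end

section
/- Let u_1,…,u_N ∈ S^d be pairwise distinct and let a_1,…,a_N be nonzero real numbers. Then Σ_{i=1}^N a_i σ((xᵀ,1)u_i) = 0 for all x ∈ B^d if and only if both of the following hold: (1) for every index i with u_i ∈ S_0 there exists an index j ≠ i such that u_j = -u_i and a_j = -a_i; (2) (1/2) Σ_{i : u_i ∈ S_0} a_i u_i + Σ_{i : u_i ∈ S_+} a_i u_i = 0 in ℝ^{d+1}. -/
open MeasureTheory Real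

noncomputable section

namespace Aux

variable {d : ℕ}

/-- projection to first d coords -/
def pE {d : ℕ} (u : E (d + 1)) : E d := WithLp.toLp 2 (fun i : Fin d => u i.castSucc)

lemma aff_eq (x : E d) (u : E (d+1)) :
    aff x u = (inner ℝ x (pE u) : ℝ) + u (Fin.last d) := by
  simp [aff, pE, PiLp.inner_apply, RCLike.inner_apply, conj_trivial, mul_comm]

lemma norm_split (u : E (d+1)) : ‖u‖^2 = ‖pE u‖^2 + (u (Fin.last d))^2 := by
  have h1 : ‖u‖^2 = ∑ i : Fin (d+1), (u i)^2 := by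
    rw [EuclideanSpace.norm_eq, Real.sq_sqrt (by positivity)]
    simp [sq_abs]
  have h2 : ‖pE u‖^2 = ∑ i : Fin d, (u i.castSucc)^2 := by
    rw [EuclideanSpace.norm_eq, Real.sq_sqrt (by positivity)]
    simp [pE, sq_abs]
  rw [h1, h2, Fin.sum_univ_castSucc]

/-- aff as linear map in second variable -/
def affL (x : E d) : E (d+1) →ₗ[ℝ] ℝ where
  toFun u := aff x u
  map_add' u v := by
    simp [aff, mul_add, Finset.sum_add_distrib]; ring
  map_smul' c u := by
    simp only [aff, PiLp.smul_apply, smul_eq_mul, mul_add, Finset.mul_sum, RingHom.id_apply]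
    congr 1
    · exact Finset.sum_congr rfl (fun i _ => by ring)


lemma aff_smul (x : E d) (c : ℝ) (u : E (d+1)) : aff x (c • u) = c * aff x u :=
  (affL x).map_smul c u

lemma aff_neg (x : E d) (u : E (d+1)) : aff x (-u) = - aff x u :=
  map_neg (affL x) u

lemma aff_zero (x : E d) : aff x (0 : E (d+1)) = 0 := map_zero (affL x)

lemma aff_sum {ι : Type*} (x : E d) (s : Finset ι) (g : ι → E (d+1)) :
    aff x (∑ k ∈ s, g k) = ∑ k ∈ s, aff x (g k) := map_sum (affL x) g s

lemma aff_add_smul (x v : E d) (t : ℝ) (u : E (d+1)) :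
    aff (x + t • v) u = aff x u + t * (inner ℝ v (pE u) : ℝ) := by
  simp only [aff_eq, inner_add_left, inner_smul_left, conj_trivial]
  ring


lemma mem_Splus_iff {u : E (d+1)} : u ∈ Splus d ↔ ‖u‖ = 1 ∧ Real.sqrt 2 / 2 ≤ u (Fin.last d) := by
  constructor
  · rintro ⟨h1, h2⟩
    refine ⟨by simpa using h1, by simpa using (neg_le_neg h2)⟩
  · rintro ⟨h1, h2⟩
    exact ⟨by simpa using h1, by simpa using (neg_le_neg h2)⟩

lemma mem_Szero_iff {u : E (d+1)} (hu : ‖u‖ = 1) :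
    u ∈ Szero d ↔ (-(Real.sqrt 2 / 2) < u (Fin.last d) ∧ u (Fin.last d) < Real.sqrt 2 / 2) := by
  simp only [Szero, Set.mem_diff, Set.mem_union, Set.mem_setOf_eq, hu, true_and,
    Sminus, mem_Splus_iff, not_or, not_and, not_le]

lemma trichotomy {u : E (d+1)} (hu : ‖u‖ = 1) :
    u ∈ Sminus d ∨ u ∈ Splus d ∨ u ∈ Szero d := by
  by_cases h1 : u (Fin.last d) ≤ -(Real.sqrt 2 / 2)
  · exact Or.inl ⟨hu, h1⟩
  by_cases h2 : Real.sqrt 2 / 2 ≤ u (Fin.last d)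
  · exact Or.inr (Or.inl (mem_Splus_iff.2 ⟨hu, h2⟩))
  · exact Or.inr (Or.inr ((mem_Szero_iff hu).2 ⟨lt_of_not_ge h1, lt_of_not_ge h2⟩))

lemma not_Szero_of_Sminus {u : E (d+1)} (h : u ∈ Sminus d) : u ∉ Szero d :=
  fun h' => h'.2 (Or.inl h)
lemma not_Szero_of_Splus {u : E (d+1)} (h : u ∈ Splus d) : u ∉ Szero d :=
  fun h' => h'.2 (Or.inr h)
lemma not_Splus_of_Sminus {u : E (d+1)} (h : u ∈ Sminus d) : u ∉ Splus d := by
  intro h'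
  rw [mem_Splus_iff] at h'
  have := h.2
  have h2 : (0:ℝ) < Real.sqrt 2 / 2 := by positivity
  linarith [h'.2]
lemma neg_mem_Szero {u : E (d+1)} (h : u ∈ Szero d) : -u ∈ Szero d := by
  have hu : ‖u‖ = 1 := h.1
  have hn : ‖(-u : E (d+1))‖ = 1 := by simpa using hu
  rw [mem_Szero_iff hu] at h
  rw [mem_Szero_iff hn]
  have he : (-u : E (d+1)) (Fin.last d) = -(u (Fin.last d)) := rfl
  rw [he]
  constructor <;> linarith [h.1, h.2]

lemma sq_last_lt_half {u : E (d+1)} (h : u ∈ Szero d) : (u (Fin.last d))^2 < 1/2 := by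
  have hu : ‖u‖ = 1 := h.1
  rw [mem_Szero_iff hu] at h
  have h2 : (Real.sqrt 2 / 2)^2 = 1/2 := by
    rw [div_pow, Real.sq_sqrt (by norm_num : (2:ℝ) ≥ 0)]; norm_num
  nlinarith [h.1, h.2]

lemma norm_pE_pos {u : E (d+1)} (h : u ∈ Szero d) : (1:ℝ)/2 < ‖pE u‖^2 := by
  have := norm_split u
  have hu : ‖u‖ = 1 := h.1
  have := sq_last_lt_half h
  nlinarith

/-- key sign fact for S_- -/
lemma aff_nonpos {u : E (d+1)} (h : u ∈ Sminus d) {x : E d} (hx : ‖x‖ ≤ 1) :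
    aff x u ≤ 0 := by
  obtain ⟨hu, hc⟩ := h
  rw [aff_eq]
  have hcs : (inner ℝ x (pE u) : ℝ) ≤ ‖x‖ * ‖pE u‖ := real_inner_le_norm x (pE u)
  have hns := norm_split u
  rw [hu] at hns
  have h2 : (Real.sqrt 2 / 2)^2 = 1/2 := by
    rw [div_pow, Real.sq_sqrt (by norm_num : (2:ℝ) ≥ 0)]; norm_num
  have hp0 : (0:ℝ) ≤ ‖pE u‖ := norm_nonneg _
  have hx0 : (0:ℝ) ≤ ‖x‖ := norm_nonneg _
  have hsq2 : (0:ℝ) < Real.sqrt 2 / 2 := by positivity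
  nlinarith [sq_nonneg (‖pE u‖ + u (Fin.last d))]

lemma aff_nonneg {u : E (d+1)} (h : u ∈ Splus d) {x : E d} (hx : ‖x‖ ≤ 1) :
    0 ≤ aff x u := by
  have := aff_nonpos h hx
  rw [aff_neg] at this
  linarith

lemma relu_of_nonpos {t : ℝ} (h : t ≤ 0) : relu t = 0 := max_eq_right h
lemma relu_of_nonneg {t : ℝ} (h : 0 ≤ t) : relu t = t := max_eq_left h
lemma relu_eq (t : ℝ) : relu t = t/2 + |t|/2 := by
  rcases le_or_gt t 0 with h | h
  · rw [relu_of_nonpos h, abs_of_nonpos h]; ring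
  · rw [relu_of_nonneg h.le, abs_of_pos h]; ring


lemma aff_add (x : E d) (v w : E (d+1)) : aff x (v + w) = aff x v + aff x w :=
  map_add (affL x) v w

lemma Szero_not_Splus {u : E (d+1)} (h : u ∈ Szero d) : u ∉ Splus d :=
  fun h' => h.2 (Or.inr h')

set_option maxHeartbeats 1000000 in
open Classical in
lemma keyComp {N : ℕ} (u : Fin N → E (d+1)) (a : Fin N → ℝ) (hu : ∀ i, ‖u i‖ = 1)
    (hdist : Function.Injective u)
    (h1 : ∀ i, u i ∈ Szero d → ∃ j, j ≠ i ∧ u j = -u i ∧ a j = -a i)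
    (x : E d) (hx : ‖x‖ ≤ 1) :
    ∑ i, a i * relu (aff x (u i)) =
      aff x ((1/2 : ℝ) • (∑ i, if u i ∈ Szero d then a i • u i else 0) +
        (∑ i, if u i ∈ Splus d then a i • u i else 0)) := by
  have habs : ∑ i : Fin N, (if u i ∈ Szero d then a i * (|aff x (u i)|/2) else 0) = 0 := by
    apply Finset.sum_ninvolution (g := fun i => if h : u i ∈ Szero d then (h1 i h).choose else i)
    · intro i
      by_cases h : u i ∈ Szero d
      · obtain ⟨hne, huj, haj⟩ := (h1 i h).choose_spec
        have hz : u ((h1 i h).choose) ∈ Szero d := by rw [huj]; exact neg_mem_Szero h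
        simp only [dif_pos h]
        rw [if_pos h, if_pos hz, haj, huj, aff_neg, abs_neg]
        ring
      · simp [dif_neg h, if_neg h]
    · intro i hfi
      by_cases h : u i ∈ Szero d
      · simp only [dif_pos h]
        exact (h1 i h).choose_spec.1
      · simp [if_neg h] at hfi
    · intro i; exact Finset.mem_univ _
    · intro i
      by_cases h : u i ∈ Szero d
      · obtain ⟨hne, huj, haj⟩ := (h1 i h).choose_spec
        have hz : u ((h1 i h).choose) ∈ Szero d := by rw [huj]; exact neg_mem_Szero h
        simp only [dif_pos h, dif_pos hz]
        obtain ⟨hne2, huj2, haj2⟩ := (h1 _ hz).choose_spec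
        apply hdist
        rw [huj2, huj, neg_neg]
      · simp [dif_neg h]
  have hsplit : ∀ i : Fin N, a i * relu (aff x (u i)) =
      ((if u i ∈ Szero d then (1/2) * (a i * aff x (u i)) else 0) +
       (if u i ∈ Splus d then a i * aff x (u i) else 0)) +
      (if u i ∈ Szero d then a i * (|aff x (u i)|/2) else 0) := by
    intro i
    rcases trichotomy (hu i) with h | h | h
    · rw [if_neg (not_Szero_of_Sminus h), if_neg (not_Splus_of_Sminus h),
        if_neg (not_Szero_of_Sminus h), relu_of_nonpos (aff_nonpos h hx)]
      ring
    · rw [if_neg (not_Szero_of_Splus h), if_pos h, if_neg (not_Szero_of_Splus h),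
        relu_of_nonneg (aff_nonneg h hx)]
      ring
    · rw [if_pos h, if_neg (Szero_not_Splus h), if_pos h, relu_eq]
      ring
  rw [Finset.sum_congr rfl (fun i _ => hsplit i), Finset.sum_add_distrib,
    Finset.sum_add_distrib, habs, add_zero, aff_add, aff_smul, aff_sum, aff_sum]
  rw [Finset.mul_sum]
  congr 1
  · exact Finset.sum_congr rfl (fun i _ => by
      rw [apply_ite (aff x), aff_smul, aff_zero, mul_ite, mul_zero, mul_left_comm])
  · exact Finset.sum_congr rfl (fun i _ => by
      rw [apply_ite (aff x), aff_smul, aff_zero])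


lemma eq_zero_of_aff (W : E (d+1)) (h : ∀ x : E d, ‖x‖ ≤ 1 → aff x W = 0) : W = 0 := by
  have hlast : W (Fin.last d) = 0 := by
    have h0 := h 0 (by simp)
    simpa [aff] using h0
  have hcs : ∀ i : Fin d, W i.castSucc = 0 := by
    intro i
    have hx : ‖(EuclideanSpace.single i (1:ℝ) : E d)‖ ≤ 1 := by
      rw [EuclideanSpace.norm_single]; simp
    have := h _ hx
    rw [aff] at this
    simp only [EuclideanSpace.single_apply] at this
    rw [Finset.sum_congr rfl (fun k _ => by rw [ite_mul, one_mul, zero_mul]),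
      Finset.sum_ite_eq' Finset.univ i, if_pos (Finset.mem_univ i), hlast, add_zero] at this
    exact this
  ext j
  induction j using Fin.lastCases with
  | last => exact hlast
  | cast i => exact hcs i


open Filter Topology in
lemma exists_x0 {N : ℕ} (u : Fin N → E (d+1)) (hu : ∀ i, ‖u i‖ = 1)
    (i : Fin N) (hi : u i ∈ Szero d) :
    ∃ x : E d, ‖x‖ < 1 ∧ aff x (u i) = 0 ∧
      ∀ k, u k ∈ Szero d → u k ≠ u i → u k ≠ -u i → aff x (u k) ≠ 0 := by
  have hw2 : (1:ℝ)/2 < ‖pE (u i)‖^2 := norm_pE_pos hi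
  have hwpos : (0:ℝ) < ‖pE (u i)‖ := by nlinarith [norm_nonneg (pE (u i))]
  suffices h : ∀ K : Finset (Fin N), ∃ x : E d, ‖x‖ < 1 ∧ aff x (u i) = 0 ∧
      ∀ k ∈ K, u k ∈ Szero d → u k ≠ u i → u k ≠ -u i → aff x (u k) ≠ 0 by
    obtain ⟨x, h1, h2, h3⟩ := h Finset.univ
    exact ⟨x, h1, h2, fun k => h3 k (Finset.mem_univ k)⟩
  intro K
  induction K using Finset.induction_on with
  | empty =>
    set w := pE (u i)
    set c := u i (Fin.last d) with hc
    refine ⟨(-c / ‖w‖^2) • w, ?_, ?_, by simp⟩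
    · rw [norm_smul]
      have hcl : |c| < ‖w‖ := by
        have := sq_last_lt_half hi
        nlinarith [abs_nonneg c, sq_abs c]
      rw [norm_div, Real.norm_eq_abs, Real.norm_eq_abs, abs_neg, abs_pow, abs_norm]
      rw [div_mul_eq_mul_div, div_lt_one (by positivity)]
      nlinarith [abs_nonneg c]
    · rw [aff_eq, real_inner_smul_left, real_inner_self_eq_norm_sq]
      field_simp
      linarith [hc]
  | insert _ _ hk ih =>
    rename_i k K
    obtain ⟨x, hx1, hx2, hx3⟩ := ih
    by_cases hcond : u k ∈ Szero d ∧ u k ≠ u i ∧ u k ≠ -u i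
    swap
    · refine ⟨x, hx1, hx2, fun k' hk' h1 h2 h3 => ?_⟩
      rcases Finset.mem_insert.1 hk' with rfl | hk''
      · exact absurd ⟨h1, h2, h3⟩ hcond
      · exact hx3 k' hk'' h1 h2 h3
    by_cases hzero : aff x (u k) = 0
    swap
    · refine ⟨x, hx1, hx2, fun k' hk' h1 h2 h3 => ?_⟩
      rcases Finset.mem_insert.1 hk' with rfl | hk''
      · exact hzero
      · exact hx3 k' hk'' h1 h2 h3
    obtain ⟨hkz, hki, hkni⟩ := hcond
    set w := pE (u i) with hwdef
    set p := pE (u k) with hpdef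
    set lam := (inner ℝ p w : ℝ) / ‖w‖^2 with hlam
    set v := p - lam • w with hvdef
    have hw2ne : ‖w‖^2 ≠ 0 := by positivity
    have hvw : (inner ℝ v w : ℝ) = 0 := by
      rw [hvdef, inner_sub_left, real_inner_smul_left, hlam, real_inner_self_eq_norm_sq]
      field_simp
      ring
    have hpv : p = v + lam • w := by rw [hvdef, sub_add_cancel]
    have hvp : (inner ℝ v p : ℝ) = ‖v‖^2 := by
      rw [hpv, inner_add_right, real_inner_smul_right, hvw,
        real_inner_self_eq_norm_sq]
      ring
    have hxw : (inner ℝ x w : ℝ) = -(u i (Fin.last d)) := by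
      have := hx2
      rw [aff_eq] at this
      linarith
    have hvne : v ≠ 0 := by
      intro hv0
      have hplam : p = lam • w := by rw [hpv, hv0, zero_add]
      have hck : u k (Fin.last d) = lam * u i (Fin.last d) := by
        have := hzero
        rw [aff_eq, ← hpdef, hplam, real_inner_smul_right, hxw] at this
        linarith
      have huk : u k = lam • u i := by
        ext j
        induction j using Fin.lastCases with
        | last => simpa using hck
        | cast i' =>
          have := congrFun (congrArg (fun (z : E d) => (z : Fin d → ℝ)) hplam) i'
          simpa [hpdef, hwdef, pE] using this
      have hnormk : (1:ℝ) = |lam| := by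
        have h1 := hu k
        rw [huk, norm_smul, hu i, mul_one, Real.norm_eq_abs] at h1
        exact h1.symm
      rcases abs_eq (by norm_num : (0:ℝ) ≤ 1) |>.1 hnormk.symm with h | h
      · exact hki (by rw [huk, h, one_smul])
      · exact hkni (by rw [huk, h, neg_one_smul])
    have hv2pos : (0:ℝ) < ‖v‖^2 := by
      have := norm_pos_iff.2 hvne
      positivity
    -- choose t
    have hA : ∀ᶠ t in 𝓝 (0:ℝ), ‖x + t • v‖ < 1 := by
      have hcont : Continuous fun t : ℝ => ‖x + t • v‖ :=
        (continuous_const.add (continuous_id.smul continuous_const)).norm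
      have ht : Filter.Tendsto (fun t : ℝ => ‖x + t • v‖) (𝓝 0) (𝓝 ‖x + (0:ℝ) • v‖) :=
        hcont.tendsto 0
      rw [zero_smul, add_zero] at ht
      exact ht.eventually_lt_const hx1
    have hB : ∀ᶠ t in 𝓝 (0:ℝ), ∀ k' ∈ K,
        u k' ∈ Szero d → u k' ≠ u i → u k' ≠ -u i → aff (x + t • v) (u k') ≠ 0 := by
      rw [eventually_all_finset]
      intro k' hk'
      by_cases hc1 : u k' ∈ Szero d ∧ u k' ≠ u i ∧ u k' ≠ -u i
      · obtain ⟨hc1a, hc1b, hc1c⟩ := hc1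
        have hne := hx3 k' hk' hc1a hc1b hc1c
        have ht : Filter.Tendsto (fun t : ℝ => aff x (u k') + t * (inner ℝ v (pE (u k')) : ℝ))
            (𝓝 0) (𝓝 (aff x (u k'))) := by
          have : Continuous fun t : ℝ => aff x (u k') + t * (inner ℝ v (pE (u k')) : ℝ) := by
            continuity
          have h0 := this.tendsto 0
          simpa using h0
        filter_upwards [ht.eventually_ne hne] with t ht' _ _ _
        rw [aff_add_smul]
        exact ht'
      · exact Filter.Eventually.of_forall (fun t h1 h2 h3 => absurd ⟨h1, h2, h3⟩ hc1)
    haveI : (𝓝[≠] (0:ℝ)).NeBot := NormedField.nhdsNE_neBot (0:ℝ)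
    have hAll : ∀ᶠ t in 𝓝[≠] (0:ℝ), (‖x + t • v‖ < 1 ∧ ∀ k' ∈ K,
        u k' ∈ Szero d → u k' ≠ u i → u k' ≠ -u i → aff (x + t • v) (u k') ≠ 0) ∧
        t ∈ ({(0:ℝ)}ᶜ : Set ℝ) :=
      (((hA.and hB).filter_mono nhdsWithin_le_nhds)).and eventually_mem_nhdsWithin
    obtain ⟨t, ⟨⟨ht1, ht2⟩, ht0⟩⟩ := hAll.exists
    have ht0' : t ≠ 0 := ht0
    refine ⟨x + t • v, ht1, ?_, fun k' hk' h1 h2 h3 => ?_⟩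
    · rw [aff_add_smul, hx2, ← hwdef, hvw, mul_zero, add_zero]
    · rcases Finset.mem_insert.1 hk' with rfl | hk''
      · rw [aff_add_smul, hzero, ← hpdef, hvp, zero_add]
        exact mul_ne_zero ht0' (ne_of_gt hv2pos)
      · exact ht2 k' hk'' h1 h2 h3


lemma pE_neg (u : E (d+1)) : pE (-u) = -pE u := by ext i; simp [pE]

open Filter Topology in
lemma pairing {N : ℕ} (u : Fin N → E (d+1)) (a : Fin N → ℝ) (hu : ∀ i, ‖u i‖ = 1)
    (hdist : Function.Injective u) (ha : ∀ i, a i ≠ 0)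
    (hf : ∀ x : E d, ‖x‖ ≤ 1 → ∑ i, a i * relu (aff x (u i)) = 0)
    (i : Fin N) (hi : u i ∈ Szero d) :
    ∃ j, j ≠ i ∧ u j = -u i ∧ a j = -a i := by
  obtain ⟨x₀, hx1, hx2, hx3⟩ := exists_x0 u hu i hi
  set v := pE (u i) with hv
  have hv2 : (1:ℝ)/2 < ‖v‖^2 := norm_pE_pos hi
  set B : Fin N → ℝ := fun k => (inner ℝ v (pE (u k)) : ℝ) with hB
  set α : Fin N → ℝ := fun k => aff x₀ (u k) with hα
  -- eventual conditions
  have hA : ∀ᶠ t in 𝓝 (0:ℝ), ‖x₀ + t • v‖ < 1 := by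
    have hcont : Continuous fun t : ℝ => ‖x₀ + t • v‖ :=
      (continuous_const.add (continuous_id.smul continuous_const)).norm
    have ht := hcont.tendsto 0
    rw [zero_smul, add_zero] at ht
    exact ht.eventually_lt_const hx1
  have hA' : ∀ᶠ t in 𝓝 (0:ℝ), ‖x₀ + (-t) • v‖ < 1 := by
    have hcont : Continuous fun t : ℝ => ‖x₀ + (-t) • v‖ :=
      (continuous_const.add ((continuous_neg).smul continuous_const)).norm
    have ht := hcont.tendsto 0
    rw [neg_zero, zero_smul, add_zero] at ht
    exact ht.eventually_lt_const hx1
  have hC : ∀ᶠ t in 𝓝 (0:ℝ), ∀ k, α k ≠ 0 → |t * B k| < |α k| := by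
    rw [Filter.eventually_all]
    intro k
    by_cases hαk : α k = 0
    · exact Filter.Eventually.of_forall (fun t h => absurd hαk h)
    · have hcont : Continuous fun t : ℝ => |t * B k| :=
        (continuous_id.mul continuous_const).abs
      have ht := hcont.tendsto 0
      rw [zero_mul, abs_zero] at ht
      filter_upwards [ht.eventually_lt_const (abs_pos.2 hαk)] with t ht' _
      exact ht'
  haveI : (𝓝[>] (0:ℝ)).NeBot := nhdsGT_neBot (0:ℝ)
  have hAll : ∀ᶠ t in 𝓝[>] (0:ℝ), ((‖x₀ + t • v‖ < 1 ∧ ‖x₀ + (-t) • v‖ < 1) ∧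
      ∀ k, α k ≠ 0 → |t * B k| < |α k|) ∧ t ∈ Set.Ioi (0:ℝ) :=
    (((hA.and hA').and hC).filter_mono nhdsWithin_le_nhds).and eventually_mem_nhdsWithin
  obtain ⟨t₀, ⟨⟨hm1, hm2⟩, hcb⟩, ht0⟩ := hAll.exists
  have ht0' : (0:ℝ) < t₀ := ht0
  -- the three sum evaluations
  have hFsum : ∀ s : ℝ, ‖x₀ + s • v‖ ≤ 1 → ∑ k, a k * relu (α k + s * B k) = 0 := by
    intro s hs
    have h0 := hf _ hs
    rw [← h0]
    exact Finset.sum_congr rfl (fun k _ => by rw [aff_add_smul])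
  have hm0 : ‖x₀ + (0:ℝ) • v‖ ≤ 1 := by rw [zero_smul, add_zero]; exact hx1.le
  have hbig : ∑ k, (a k * relu (α k + t₀ * B k) + a k * relu (α k - t₀ * B k)
      - 2 * (a k * relu (α k))) = 0 := by
    rw [Finset.sum_sub_distrib, Finset.sum_add_distrib, hFsum t₀ hm1.le]
    have e2 : ∑ k, a k * relu (α k - t₀ * B k) = 0 := by
      rw [← hFsum (-t₀) hm2.le]
      exact Finset.sum_congr rfl (fun k _ => by rw [neg_mul, ← sub_eq_add_neg])
    have e3 : ∑ k, a k * relu (α k) = 0 := by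
      rw [← hFsum 0 hm0]
      exact Finset.sum_congr rfl (fun k _ => by rw [zero_mul, add_zero])
    rw [e2, ← Finset.mul_sum, e3]
    ring
  -- vanishing of generic terms
  have key : ∀ k, u k ≠ -u i → k ≠ i →
      a k * relu (α k + t₀ * B k) + a k * relu (α k - t₀ * B k)
        - 2 * (a k * relu (α k)) = 0 := by
    intro k hkni hkie
    by_cases hαk : α k = 0
    · rcases trichotomy (hu k) with h | h | h
      · have e1 : α k + t₀ * B k ≤ 0 := by
          have := aff_nonpos h hm1.le
          rw [aff_add_smul] at this
          exact this
        have e2 : α k - t₀ * B k ≤ 0 := by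
          have := aff_nonpos h hm2.le
          rw [aff_add_smul, neg_mul, ← sub_eq_add_neg] at this
          exact this
        rw [relu_of_nonpos e1, relu_of_nonpos e2, relu_of_nonpos hαk.le]
        ring
      · have e1 : 0 ≤ α k + t₀ * B k := by
          have := aff_nonneg h hm1.le
          rw [aff_add_smul] at this
          exact this
        have e2 : 0 ≤ α k - t₀ * B k := by
          have := aff_nonneg h hm2.le
          rw [aff_add_smul, neg_mul, ← sub_eq_add_neg] at this
          exact this
        rw [relu_of_nonneg e1, relu_of_nonneg e2,
          relu_of_nonneg (hαk.symm.le.trans (le_refl _))]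
        ring
      · exact absurd hαk (hx3 k h (fun e => hkie (hdist e)) hkni)
    · have hb := hcb k hαk
      rcases lt_or_gt_of_ne hαk with hneg | hpos
      · have e1 : α k + t₀ * B k ≤ 0 := by
          rw [abs_of_neg hneg] at hb
          have := (abs_lt.1 hb).2
          linarith
        have e2 : α k - t₀ * B k ≤ 0 := by
          rw [abs_of_neg hneg] at hb
          have := (abs_lt.1 hb).1
          linarith
        rw [relu_of_nonpos e1, relu_of_nonpos e2, relu_of_nonpos hneg.le]
        ring
      · have e1 : 0 ≤ α k + t₀ * B k := by
          rw [abs_of_pos hpos] at hb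
          have := (abs_lt.1 hb).1
          linarith
        have e2 : 0 ≤ α k - t₀ * B k := by
          rw [abs_of_pos hpos] at hb
          have := (abs_lt.1 hb).2
          linarith
        rw [relu_of_nonneg e1, relu_of_nonneg e2, relu_of_nonneg hpos.le]
        ring
  -- compute term i
  have hαi : α i = 0 := hx2
  have hBi : B i = ‖v‖^2 := real_inner_self_eq_norm_sq v
  have htermi : a i * relu (α i + t₀ * B i) + a i * relu (α i - t₀ * B i)
      - 2 * (a i * relu (α i)) = a i * (t₀ * ‖v‖^2) := by
    rw [hαi, hBi, zero_add, zero_sub, relu_of_nonneg (by positivity),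
      relu_of_nonpos (by nlinarith), relu_of_nonpos le_rfl]
    ring
  have htv : (0:ℝ) < t₀ * ‖v‖^2 := by positivity
  by_cases hex : ∃ j, u j = -u i
  · obtain ⟨j, hj⟩ := hex
    have hui0 : u i ≠ 0 := by
      intro h
      have h1 := hu i
      rw [h, norm_zero] at h1
      norm_num at h1
    have hji : j ≠ i := by
      intro e
      rw [e] at hj
      apply hui0
      rw [eq_neg_iff_add_eq_zero] at hj
      have h2 : (2:ℝ) • u i = 0 := by rw [two_smul]; exact hj
      simpa using (smul_eq_zero.1 h2).resolve_left (by norm_num)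
    have hαj : α j = 0 := by
      show aff x₀ (u j) = 0
      rw [hj, aff_neg, hx2, neg_zero]
    have hBj : B j = -‖v‖^2 := by
      show (inner ℝ v (pE (u j)) : ℝ) = -‖v‖^2
      rw [hj, pE_neg, inner_neg_right, real_inner_self_eq_norm_sq]
    have htermj : a j * relu (α j + t₀ * B j) + a j * relu (α j - t₀ * B j)
        - 2 * (a j * relu (α j)) = a j * (t₀ * ‖v‖^2) := by
      rw [hαj, hBj, zero_add, zero_sub, relu_of_nonpos (by nlinarith),
        relu_of_nonpos le_rfl]
      have : -(t₀ * -‖v‖^2) = t₀ * ‖v‖^2 := by ring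
      rw [this, relu_of_nonneg (by positivity)]
      ring
    have hsum2 : (a i + a j) * (t₀ * ‖v‖^2) = 0 := by
      have hss : ∑ k ∈ ({i, j} : Finset (Fin N)), (a k * relu (α k + t₀ * B k)
          + a k * relu (α k - t₀ * B k) - 2 * (a k * relu (α k))) = 0 := by
        rw [← hbig]
        apply Finset.sum_subset (Finset.subset_univ _)
        intro k _ hk
        simp only [Finset.mem_insert, Finset.mem_singleton, not_or] at hk
        refine key k ?_ hk.1
        intro e
        exact hk.2 (hdist (e.trans hj.symm))
      rw [Finset.sum_pair hji.symm, htermi, htermj] at hss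
      linarith [hss]
    have haij : a j = -a i := by
      have := mul_eq_zero.1 hsum2
      rcases this with h | h
      · linarith
      · exact absurd h (ne_of_gt htv)
    exact ⟨j, hji, hj, haij⟩
  · exfalso
    have hss : ∑ k ∈ ({i} : Finset (Fin N)), (a k * relu (α k + t₀ * B k)
        + a k * relu (α k - t₀ * B k) - 2 * (a k * relu (α k))) = 0 := by
      rw [← hbig]
      apply Finset.sum_subset (Finset.subset_univ _)
      intro k _ hk
      simp only [Finset.mem_singleton] at hk
      exact key k (fun e => hex ⟨k, e⟩) hk
    rw [Finset.sum_singleton, htermi] at hss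
    exact ha i (by
      rcases mul_eq_zero.1 hss with h | h
      · exact h
      · exact absurd h (ne_of_gt htv))

end Aux

open Classical in
/-- characterization of vanishing finite ReLU ridge combinations. -/
theorem statement3 (d N : ℕ) (hd : 1 ≤ d) (u : Fin N → E (d + 1)) (a : Fin N → ℝ)
    (hu : ∀ i, ‖u i‖ = 1) (hdist : Function.Injective u) (ha : ∀ i, a i ≠ 0) :
    (∀ x : E d, ‖x‖ ≤ 1 → ∑ i, a i * relu (aff x (u i)) = 0) ↔
      ((∀ i, u i ∈ Szero d → ∃ j, j ≠ i ∧ u j = -u i ∧ a j = -a i) ∧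
        ((1 / 2 : ℝ) • (∑ i, if u i ∈ Szero d then a i • u i else 0) +
          (∑ i, if u i ∈ Splus d then a i • u i else 0) = (0 : E (d + 1)))) := by
  constructor
  · intro hf
    have h1 : ∀ i, u i ∈ Szero d → ∃ j, j ≠ i ∧ u j = -u i ∧ a j = -a i :=
      fun i hi => Aux.pairing u a hu hdist ha hf i hi
    refine ⟨h1, ?_⟩
    apply Aux.eq_zero_of_aff
    intro x hx
    rw [← Aux.keyComp u a hu hdist h1 x hx]
    exact hf x hx
  · rintro ⟨h1, h2⟩ x hx
    rw [Aux.keyComp u a hu hdist h1 x hx, h2, Aux.aff_zero]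
end
end
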